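/- arXiv:2506.16789 — 9 statements merged into one kernel-verified Lean document; each statement's English description precedes it below -/
import Mathlib

section
/- A finite simple graph Γ is isomorphic to the double D(Γ') of some graph Γ' (where D(Γ') has vertex set Γ'×{0,1} and edges (v,ε)–(w,δ) for every edge v–w of Γ' and all ε,δ∈{0,1}) if and only if every twin module of Γ has even order. -/
/-- The double of a graph: vertex set `V × Bool`, with `(v,ε)` adjacent to `(w,δ)`
iff `v` and `w` are adjacent. -/
def GraphDouble {V : Type*} (G : SimpleGraph V) : SimpleGraph (V × Bool) where
  Adj p q := G.Adj p.1 q.1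
  symm := ⟨fun _ _ h => G.adj_symm h⟩
  loopless := ⟨fun p h => G.irrefl (v := p.1) h⟩

lemma exists_involution {α : Type*} [DecidableEq α] :
    ∀ (n : ℕ) (s : Finset α), s.card = n → Even n →
    ∃ f : α → α, ∀ x ∈ s, f x ∈ s ∧ f x ≠ x ∧ f (f x) = x := by
  intro n
  induction n using Nat.strong_induction_on with
  | _ n ih =>
    intro s hcard heven
    rcases n with _ | m
    · exact ⟨id, fun x hx => by simp [Finset.card_eq_zero.mp hcard] at hx⟩
    · have h2 : 2 ≤ m + 1 := by
        rcases heven with ⟨r, hr⟩; omega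
      obtain ⟨a, ha⟩ : s.Nonempty := Finset.card_pos.mp (by omega)
      have : (s.erase a).Nonempty := Finset.card_pos.mp (by
        rw [Finset.card_erase_of_mem ha]; omega)
      obtain ⟨b, hb⟩ := this
      have hba : b ≠ a := Finset.ne_of_mem_erase hb
      have hbs : b ∈ s := Finset.mem_of_mem_erase hb
      have hcard' : ((s.erase a).erase b).card = m - 1 := by
        rw [Finset.card_erase_of_mem hb, Finset.card_erase_of_mem ha]
        omega
      obtain ⟨f, hf⟩ := ih (m - 1) (by omega) ((s.erase a).erase b) hcard'
        (by rcases heven with ⟨r, hr⟩; exact ⟨r - 1, by omega⟩)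
      refine ⟨fun x => if x = a then b else if x = b then a else f x, ?_⟩
      intro x hx
      dsimp only
      by_cases hxa : x = a
      · subst hxa
        rw [if_pos rfl, if_neg hba, if_pos rfl]
        exact ⟨hbs, hba, rfl⟩
      · by_cases hxb : x = b
        · subst hxb
          rw [if_neg hxa, if_pos rfl, if_pos rfl]
          exact ⟨ha, fun h => hxa h.symm, rfl⟩
        · have hx' : x ∈ (s.erase a).erase b :=
            Finset.mem_erase.mpr ⟨hxb, Finset.mem_erase.mpr ⟨hxa, hx⟩⟩
          obtain ⟨hf1, hf2, hf3⟩ := hf x hx'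
          have hfa : f x ≠ a := Finset.ne_of_mem_erase (Finset.mem_of_mem_erase hf1)
          have hfb : f x ≠ b := Finset.ne_of_mem_erase hf1
          rw [if_neg hxa, if_neg hxb, if_neg hfa, if_neg hfb, hf3]
          exact ⟨Finset.mem_of_mem_erase (Finset.mem_of_mem_erase hf1), hf2, rfl⟩

lemma iso_module_ncard {V W : Type*} {G : SimpleGraph V} {H : SimpleGraph W}
    (e : G ≃g H) (v : V) :
    {w : V | G.neighborSet w = G.neighborSet v}.ncard
      = {w : W | H.neighborSet w = H.neighborSet (e v)}.ncard := by
  have key : ∀ w : V, G.neighborSet w = G.neighborSet v ↔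
      H.neighborSet (e w) = H.neighborSet (e v) := by
    intro w
    simp only [Set.ext_iff, SimpleGraph.mem_neighborSet]
    constructor
    · intro h p
      obtain ⟨u, rfl⟩ := e.toEquiv.surjective p
      show H.Adj (e w) (e u) ↔ H.Adj (e v) (e u)
      rw [e.map_adj_iff, e.map_adj_iff]
      exact h u
    · intro h u
      rw [← e.map_adj_iff (v := w), ← e.map_adj_iff (v := v)]
      exact h (e u)
  have himg : e '' {w : V | G.neighborSet w = G.neighborSet v}
      = {w : W | H.neighborSet w = H.neighborSet (e v)} := by
    ext p
    constructor
    · rintro ⟨u, hu, rfl⟩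
      exact (key u).mp hu
    · intro hp
      obtain ⟨u, rfl⟩ := e.toEquiv.surjective p
      exact ⟨u, (key u).mpr hp, rfl⟩
  rw [← himg, Set.ncard_image_of_injective _ (EquivLike.injective e)]

lemma double_module_even {W : Type*} (G' : SimpleGraph W) (p : W × Bool) :
    Even ({q : W × Bool | (GraphDouble G').neighborSet q
      = (GraphDouble G').neighborSet p}.ncard) := by
  have hset : {q : W × Bool | (GraphDouble G').neighborSet q
      = (GraphDouble G').neighborSet p}
      = {w : W | G'.neighborSet w = G'.neighborSet p.1} ×ˢ (Set.univ : Set Bool) := by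
    ext ⟨a, b⟩
    simp only [Set.mem_setOf_eq, Set.mem_prod, Set.mem_univ, and_true,
      Set.ext_iff, SimpleGraph.mem_neighborSet]
    constructor
    · intro h u
      simpa [GraphDouble] using h (u, true)
    · intro h q
      simpa [GraphDouble] using h q.1
  rw [hset, ← Nat.card_coe_set_eq, Nat.card_congr (Equiv.Set.prod _ _),
    Nat.card_prod]
  have h2 : Nat.card ↥(Set.univ : Set Bool) = 2 := by
    rw [Nat.card_congr (Equiv.Set.univ Bool), Nat.card_eq_fintype_card, Fintype.card_bool]
  rw [h2]
  exact ⟨_, by ring⟩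

lemma adj_congr {U : Type*} (G : SimpleGraph U) {a a' b b' : U}
    (ha : G.neighborSet a = G.neighborSet a') (hb : G.neighborSet b = G.neighborSet b') :
    G.Adj a b ↔ G.Adj a' b' := by
  have h1 : G.Adj a b ↔ G.Adj a' b := by
    constructor
    · intro h
      have : b ∈ G.neighborSet a' := ha ▸ h
      exact this
    · intro h
      have : b ∈ G.neighborSet a := ha.symm ▸ h
      exact this
  have h2 : G.Adj a' b ↔ G.Adj a' b' := by
    rw [G.adj_comm a' b, G.adj_comm a' b']
    constructor
    · intro h
      have : a' ∈ G.neighborSet b' := hb ▸ h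
      exact this
    · intro h
      have : a' ∈ G.neighborSet b := hb.symm ▸ h
      exact this
  exact h1.trans h2

lemma construct {U : Type} [Fintype U] (G : SimpleGraph U)
    (h : ∀ v : U, Even ({w : U | G.neighborSet w = G.neighborSet v}.ncard)) :
    ∃ (W : Type) (G' : SimpleGraph W), Nonempty (G ≃g GraphDouble G') := by
  classical
  set St : Setoid U :=
    ⟨fun v w => G.neighborSet v = G.neighborSet w,
      ⟨fun _ => rfl, Eq.symm, Eq.trans⟩⟩ with hSt
  have hcls : ∀ q : Quotient St, ∃ f : U → U,
      ∀ x ∈ ({x | Quotient.mk St x = q} : Set U).toFinset,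
        f x ∈ ({x | Quotient.mk St x = q} : Set U).toFinset ∧ f x ≠ x ∧ f (f x) = x := by
    intro q
    refine exists_involution _ _ rfl ?_
    induction q using Quotient.inductionOn with
    | _ v =>
      rw [← Set.ncard_eq_toFinset_card']
      have hset : {x | Quotient.mk St x = Quotient.mk St v}
          = {w : U | G.neighborSet w = G.neighborSet v} := by
        ext x
        rw [Set.mem_setOf_eq, Set.mem_setOf_eq, Quotient.eq]
        rfl
      rw [hset]
      exact h v
  choose F hF using hcls
  set f : U → U := fun v => F (Quotient.mk St v) v with hfdef
  have hmem : ∀ v : U, v ∈ ({x | Quotient.mk St x = Quotient.mk St v} : Set U).toFinset := by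
    intro v
    simp only [Set.mem_toFinset, Set.mem_setOf_eq]
  have hfcls : ∀ v : U, Quotient.mk St (f v) = Quotient.mk St v := by
    intro v
    have := (hF (Quotient.mk St v) v (hmem v)).1
    simpa using this
  have hf1 : ∀ v : U, G.neighborSet (f v) = G.neighborSet v := by
    intro v
    have := Quotient.eq.mp (hfcls v)
    exact this
  have hf2 : ∀ v : U, f v ≠ v := fun v => (hF (Quotient.mk St v) v (hmem v)).2.1
  have hf3 : ∀ v : U, f (f v) = v := by
    intro v
    have h1 := (hF (Quotient.mk St v) v (hmem v)).2.2
    show F (Quotient.mk St (f v)) (f v) = v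
    rw [hfcls v]
    exact h1
  -- pairing setoid
  have hequiv : Equivalence (fun v w : U => w = v ∨ w = f v) := by
    constructor
    · exact fun v => Or.inl rfl
    · intro v w hw
      rcases hw with rfl | rfl
      · exact Or.inl rfl
      · exact Or.inr (hf3 v).symm
    · intro v w u hw hu
      rcases hw with rfl | rfl
      · exact hu
      · rcases hu with rfl | rfl
        · exact Or.inr rfl
        · exact Or.inl (hf3 v)
  set St2 : Setoid U := ⟨fun v w => w = v ∨ w = f v, hequiv⟩ with hSt2
  set W := Quotient St2 with hW
  set G' : SimpleGraph W :=
    { Adj := fun q r => G.Adj (Quotient.out q) (Quotient.out r)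
      symm := ⟨fun _ _ hh => G.adj_symm hh⟩
      loopless := ⟨fun q hh => G.irrefl hh⟩ } with hG'
  have hout : ∀ v : U, G.neighborSet (Quotient.out (Quotient.mk St2 v)) = G.neighborSet v := by
    intro v
    have h1 : Quotient.mk St2 (Quotient.out (Quotient.mk St2 v)) = Quotient.mk St2 v :=
      Quotient.out_eq _
    have h2 : v = Quotient.out (Quotient.mk St2 v)
        ∨ v = f (Quotient.out (Quotient.mk St2 v)) := Quotient.eq.mp h1
    rcases h2 with h2 | h2
    · rw [← h2]
    · calc G.neighborSet (Quotient.out (Quotient.mk St2 v))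
          = G.neighborSet (f (Quotient.out (Quotient.mk St2 v))) := (hf1 _).symm
        _ = G.neighborSet v := by rw [← h2]
  set eto : U → W × Bool := fun v => (Quotient.mk St2 v,
      if v = Quotient.out (Quotient.mk St2 v) then true else false) with heto
  set einv : W × Bool → U :=
      fun p => if p.2 then Quotient.out p.1 else f (Quotient.out p.1) with heinv
  have hli : Function.LeftInverse einv eto := by
    intro v
    simp only [heto, heinv]
    by_cases hv : v = Quotient.out (Quotient.mk St2 v)
    · simp only [if_pos hv, if_pos rfl]
      exact hv.symm
    · simp only [if_neg hv, if_neg (Bool.false_ne_true), Bool.false_eq_true, if_false]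
      have h1 : Quotient.mk St2 (Quotient.out (Quotient.mk St2 v)) = Quotient.mk St2 v :=
        Quotient.out_eq _
      have h2 : v = Quotient.out (Quotient.mk St2 v)
          ∨ v = f (Quotient.out (Quotient.mk St2 v)) := Quotient.eq.mp h1
      rcases h2 with h2 | h2
      · exact absurd h2 hv
      · exact h2.symm
  have hri : Function.RightInverse einv eto := by
    rintro ⟨q, b⟩
    simp only [heto, heinv]
    cases b
    · simp only [Bool.false_eq_true, if_false]
      have h1 : Quotient.mk St2 (f (Quotient.out q)) = q := by
        have : Quotient.mk St2 (f (Quotient.out q)) = Quotient.mk St2 (Quotient.out q) := by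
          rw [Quotient.eq]
          exact Or.inr (hf3 _).symm
        rw [this, Quotient.out_eq]
      have h2 : f (Quotient.out q) ≠ Quotient.out (Quotient.mk St2 (f (Quotient.out q))) := by
        rw [h1]
        intro hcon
        exact hf2 (Quotient.out q) hcon
      rw [Prod.ext_iff]
      exact ⟨h1, by simp [if_neg h2]⟩
    · simp only [if_pos rfl]
      rw [Prod.ext_iff]
      refine ⟨Quotient.out_eq _, ?_⟩
      simp [Quotient.out_eq]
  set e : U ≃ W × Bool := ⟨eto, einv, hli, hri⟩ with he
  refine ⟨W, G', ⟨⟨e, ?_⟩⟩⟩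
  intro v w
  show G.Adj (Quotient.out (Quotient.mk St2 v)) (Quotient.out (Quotient.mk St2 w)) ↔ G.Adj v w
  exact adj_congr G (hout v) (hout w)

/-- A finite simple graph is isomorphic to the double of some graph iff every twin
module (set of vertices with a fixed common link) has even order. -/
theorem stmt0 {V : Type*} [Fintype V] (G : SimpleGraph V) :
    (∃ (W : Type) (G' : SimpleGraph W), Nonempty (G ≃g GraphDouble G')) ↔
      ∀ v : V, Even ({w : V | G.neighborSet w = G.neighborSet v}.ncard) := by
  constructor
  · rintro ⟨W, G', ⟨e⟩⟩ v
    rw [iso_module_ncard e v]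
    exact double_module_even G' (e v)
  · intro h
    classical
    set e0 : V ≃ Fin (Fintype.card V) := Fintype.equivFin V with he0
    set G0 : SimpleGraph (Fin (Fintype.card V)) :=
      { Adj := fun i j => G.Adj (e0.symm i) (e0.symm j)
        symm := ⟨fun _ _ hh => G.adj_symm hh⟩
        loopless := ⟨fun i hh => G.irrefl hh⟩ } with hG0
    have hmr : ∀ v w : V, G0.Adj (e0 v) (e0 w) ↔ G.Adj v w := by
      intro v w
      show G.Adj (e0.symm (e0 v)) (e0.symm (e0 w)) ↔ G.Adj v w
      rw [Equiv.symm_apply_apply, Equiv.symm_apply_apply]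
    set iso0 : G ≃g G0 := ⟨e0, hmr _ _⟩ with hiso0
    have h0 : ∀ i : Fin (Fintype.card V),
        Even ({j : Fin (Fintype.card V) |
          G0.neighborSet j = G0.neighborSet i}.ncard) := by
      intro i
      have := iso_module_ncard iso0 (e0.symm i)
      have hei : iso0 (e0.symm i) = i := e0.apply_symm_apply i
      rw [hei] at this
      rw [← this]
      exact h (e0.symm i)
    obtain ⟨W, G', ⟨iso1⟩⟩ := construct G0 h0
    exact ⟨W, G', ⟨iso0.trans iso1⟩⟩
end

section
/- A triangle in the diagonal graph ⧄(Γ) of a simple graph Γ corresponds to an induced octahedron in Γ: if {a,b}, {c,d}, {e,f} are three pairwise adjacent vertices of ⧄(Γ), then the six vertices a,b,c,d,e,f of Γ induce the octahedron K_{2,2,2}. Consequently, if Γ is triangle-free then ⧄(Γ) is triangle-free. -/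
/-- `a,b` and `c,d` are the two diagonals of an induced square (4-cycle) `a–c–b–d` of `G`. -/
def IsInducedSquare {V : Type*} (G : SimpleGraph V) (a b c d : V) : Prop :=
  a ≠ b ∧ c ≠ d ∧ G.Adj a c ∧ G.Adj c b ∧ G.Adj b d ∧ G.Adj d a ∧ ¬ G.Adj a b ∧ ¬ G.Adj c d

/-- A triangle in the diagonal graph corresponds to an induced octahedron `K_{2,2,2}`;
consequently triangle-free graphs have triangle-free diagonal graphs. -/
theorem stmt4 {V : Type*} (G : SimpleGraph V) :
    (∀ a b c d e f : V,
      IsInducedSquare G a b c d → IsInducedSquare G a b e f → IsInducedSquare G c d e f →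
        ((∀ x ∈ ({a, b} : Set V), ∀ y ∈ ({c, d} : Set V), G.Adj x y) ∧
         (∀ x ∈ ({a, b} : Set V), ∀ y ∈ ({e, f} : Set V), G.Adj x y) ∧
         (∀ x ∈ ({c, d} : Set V), ∀ y ∈ ({e, f} : Set V), G.Adj x y) ∧
         ¬ G.Adj a b ∧ ¬ G.Adj c d ∧ ¬ G.Adj e f ∧
         List.Pairwise (· ≠ ·) [a, b, c, d, e, f])) ∧
    (G.CliqueFree 3 → ∀ a b c d e f : V,
      ¬ (IsInducedSquare G a b c d ∧ IsInducedSquare G a b e f ∧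
          IsInducedSquare G c d e f)) := by
  constructor
  · rintro a b c d e f ⟨hab, hcd, hac, hcb, hbd, hda, hnab, hncd⟩
      ⟨-, hef, hae, heb, hbf, hfa, -, hnef⟩ ⟨-, -, hce, hed, hdf, hfc, -, -⟩
    refine ⟨?_, ?_, ?_, hnab, hncd, hnef, ?_⟩
    · rintro x (rfl | rfl) y (rfl | rfl) <;>
        simp_all [hac, hcb.symm, hda.symm, hbd]
    · rintro x (rfl | rfl) y (rfl | rfl) <;>
        simp_all [hae, hfa.symm, heb.symm, hbf]
    · rintro x (rfl | rfl) y (rfl | rfl) <;>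
        simp_all [hce, hfc.symm, hed.symm, hdf]
    · simp only [ne_eq, List.pairwise_cons, List.mem_cons, List.not_mem_nil,
        or_false, forall_eq_or_imp, forall_eq, List.Pairwise.nil,
        and_true]
      exact ⟨⟨hab, hac.ne, hda.ne', hae.ne, hfa.ne'⟩,
        ⟨hcb.ne', hbd.ne, heb.ne', hbf.ne⟩, ⟨hcd, hce.ne, hfc.ne'⟩,
        ⟨hed.ne', hdf.ne⟩, hef, fun _ h => h.elim⟩
  · rintro hG a b c d e f ⟨⟨-, -, hac, -, -, -, -, -⟩, ⟨-, -, hae, -, -, -, -, -⟩,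
      ⟨-, -, hce, -, -, -, -, -⟩⟩
    classical
    exact hG {a, c, e} (by
      simp only [SimpleGraph.is3Clique_triple_iff]
      exact ⟨hac, hae, hce⟩)
end

section
/- Let Γ be a triangle-free simple graph. If A*B is a join in the diagonal graph ⧄(Γ) (A and B nonempty sets of vertices of ⧄(Γ) with every vertex of A adjacent to every vertex of B), then supp(A)*supp(B) is a thick join subgraph of Γ, where supp(A) is the union of the 2-element vertex sets constituting the vertices of A. -/
/-- The support of a set of (ordered representatives of) vertices of the diagonal graph. -/
def diagSupp {V : Type*} (S : Set (V × V)) : Set V := {x | ∃ p ∈ S, x = p.1 ∨ x = p.2}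

/-- If `A * B` is a join of nonempty sets of vertices of the diagonal graph of a
triangle-free graph `Γ`, then `supp(A) * supp(B)` is a thick join in `Γ`. -/
theorem stmt6 {V : Type*} (G : SimpleGraph V) (htf : G.CliqueFree 3)
    (A B : Set (V × V)) (hA : A.Nonempty) (hB : B.Nonempty)
    (hjoin : ∀ p ∈ A, ∀ q ∈ B, IsInducedSquare G p.1 p.2 q.1 q.2) :
    (∀ x ∈ diagSupp A, ∀ y ∈ diagSupp B, G.Adj x y) ∧
    (∃ x ∈ diagSupp A, ∃ x' ∈ diagSupp A, x ≠ x' ∧ ¬ G.Adj x x') ∧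
    (∃ y ∈ diagSupp B, ∃ y' ∈ diagSupp B, y ≠ y' ∧ ¬ G.Adj y y') := by
  obtain ⟨p₀, hp₀⟩ := hA
  obtain ⟨q₀, hq₀⟩ := hB
  refine ⟨?_, ?_, ?_⟩
  · rintro x ⟨p, hp, hx⟩ y ⟨q, hq, hy⟩
    obtain ⟨-, -, h1, h2, h3, h4, -, -⟩ := hjoin p hp q hq
    rcases hx with rfl | rfl <;> rcases hy with rfl | rfl
    · exact h1
    · exact h4.symm
    · exact h2.symm
    · exact h3
  · obtain ⟨hne, -, -, -, -, -, hna, -⟩ := hjoin p₀ hp₀ q₀ hq₀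
    exact ⟨p₀.1, ⟨p₀, hp₀, Or.inl rfl⟩, p₀.2, ⟨p₀, hp₀, Or.inr rfl⟩, hne, hna⟩
  · obtain ⟨-, hne, -, -, -, -, -, hna⟩ := hjoin p₀ hp₀ q₀ hq₀
    exact ⟨q₀.1, ⟨q₀, hq₀, Or.inl rfl⟩, q₀.2, ⟨q₀, hq₀, Or.inr rfl⟩, hne, hna⟩
end

section
/- Every incomplete CFS graph with n ≥ 4 vertices has at least 2n − 4 edges. -/
/-- Adjacency of diagonal pairs in the diagonal graph `⧄(Γ)`. -/
def DiagAdj {V : Type*} (G : SimpleGraph V) (p q : V × V) : Prop :=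
  IsInducedSquare G p.1 p.2 q.1 q.2

/-- A cone vertex is adjacent to every other vertex. -/
def IsCone {V : Type*} (G : SimpleGraph V) (v : V) : Prop := ∀ w, w ≠ v → G.Adj v w

/-- `Γ` is CFS if its diagonal graph has a connected component whose support contains
every non-cone vertex of `Γ`. -/
def CFS {V : Type*} (G : SimpleGraph V) : Prop :=
  ∃ p : V × V, (∃ q : V × V, DiagAdj G p q) ∧
    ∀ v : V, ¬ IsCone G v → ∃ q : V × V,
      Relation.ReflTransGen (DiagAdj G) p q ∧ (v = q.1 ∨ v = q.2)

open scoped Classical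

section Aux

variable {V : Type*} [Fintype V]

/-- support of a finite set of pairs -/
noncomputable def suppF (T : Finset (V × V)) : Finset V :=
  T.image Prod.fst ∪ T.image Prod.snd

lemma mem_suppF {T : Finset (V × V)} {v : V} :
    v ∈ suppF T ↔ ∃ q ∈ T, v = q.1 ∨ v = q.2 := by
  constructor
  · intro hv
    simp only [suppF, Finset.mem_union, Finset.mem_image] at hv
    rcases hv with ⟨q, hq, h⟩ | ⟨q, hq, h⟩
    · exact ⟨q, hq, Or.inl h.symm⟩
    · exact ⟨q, hq, Or.inr h.symm⟩
  · rintro ⟨q, hq, h | h⟩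
    · exact Finset.mem_union_left _ (Finset.mem_image.2 ⟨q, hq, h.symm⟩)
    · exact Finset.mem_union_right _ (Finset.mem_image.2 ⟨q, hq, h.symm⟩)

lemma suppF_mono {T T' : Finset (V × V)} (h : T ⊆ T') : suppF T ⊆ suppF T' := by
  intro v hv
  rw [mem_suppF] at hv ⊢
  obtain ⟨q, hq, hv⟩ := hv
  exact ⟨q, h hq, hv⟩

/-- edges of `G` with both endpoints in `A` -/
noncomputable def edgesIn (G : SimpleGraph V) (A : Finset V) : Finset (Sym2 V) :=
  G.edgeFinset.filter (fun e => ∀ v ∈ e, v ∈ A)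

lemma edgesIn_mono (G : SimpleGraph V) {A A' : Finset V} (h : A ⊆ A') :
    edgesIn G A ⊆ edgesIn G A' := by
  intro e he
  simp only [edgesIn, Finset.mem_filter] at he ⊢
  exact ⟨he.1, fun v hv => h (he.2 v hv)⟩

lemma mk_mem_edgesIn {G : SimpleGraph V} {A : Finset V} {a b : V} :
    s(a, b) ∈ edgesIn G A ↔ G.Adj a b ∧ a ∈ A ∧ b ∈ A := by
  simp [edgesIn, Sym2.forall_mem_pair, and_assoc]

/-- `Built G T`: `T` can be built starting from a single pair by repeatedly adding a pair
that is `DiagAdj`-adjacent to an existing one. -/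
inductive Built (G : SimpleGraph V) : Finset (V × V) → Prop
  | base (p : V × V) : Built G {p}
  | step (T : Finset (V × V)) (q r : V × V) (hr : r ∈ T) (h : DiagAdj G r q)
      (ht : Built G T) : Built G (insert q T)

end Aux

set_option linter.unusedSectionVars false

section Count

variable {V : Type*} [Fintype V]

/-- adding one new vertex adjacent to two old ones adds at least two edges -/
lemma add_one (G : SimpleGraph V) (A : Finset V) (x r1 r2 : V)
    (hx : x ∉ A) (h1 : r1 ∈ A) (h2 : r2 ∈ A) (hr : r1 ≠ r2)
    (a1 : G.Adj x r1) (a2 : G.Adj x r2) :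
    (edgesIn G A).card + 2 ≤ (edgesIn G (insert x A)).card := by
  have hx1 : x ≠ r1 := fun h => hx (h ▸ h1)
  have hx2 : x ≠ r2 := fun h => hx (h ▸ h2)
  have hne : s(x, r1) ≠ s(x, r2) := by
    simp [Sym2.eq_iff, hr, hx2]
  have hm1 : s(x, r1) ∉ edgesIn G A := by
    rw [mk_mem_edgesIn]; tauto
  have hm2 : s(x, r2) ∉ edgesIn G A := by
    rw [mk_mem_edgesIn]; tauto
  have hsub : insert s(x, r1) (insert s(x, r2) (edgesIn G A)) ⊆ edgesIn G (insert x A) := by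
    intro e he
    simp only [Finset.mem_insert] at he
    rcases he with rfl | rfl | he
    · exact mk_mem_edgesIn.2 ⟨a1, Finset.mem_insert_self _ _, Finset.mem_insert_of_mem h1⟩
    · exact mk_mem_edgesIn.2 ⟨a2, Finset.mem_insert_self _ _, Finset.mem_insert_of_mem h2⟩
    · exact edgesIn_mono G (Finset.subset_insert _ _) he
  calc (edgesIn G A).card + 2
      = (insert s(x, r1) (insert s(x, r2) (edgesIn G A))).card := by
        rw [Finset.card_insert_of_notMem (by simp only [Finset.mem_insert]; tauto),
          Finset.card_insert_of_notMem hm2]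
    _ ≤ (edgesIn G (insert x A)).card := Finset.card_le_card hsub

lemma suppF_insert (q : V × V) (T : Finset (V × V)) :
    suppF (insert q T) = insert q.1 (insert q.2 (suppF T)) := by
  ext v
  simp only [mem_suppF, Finset.mem_insert]
  constructor
  · rintro ⟨r, hr | hr, h⟩
    · subst hr; tauto
    · exact Or.inr (Or.inr ⟨r, hr, h⟩)
  · rintro (rfl | rfl | ⟨r, hr, h⟩)
    · exact ⟨q, Or.inl rfl, Or.inl rfl⟩
    · exact ⟨q, Or.inl rfl, Or.inr rfl⟩
    · exact ⟨r, Or.inr hr, h⟩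

lemma key_count {G : SimpleGraph V} {T : Finset (V × V)} (hT : Built G T) :
    2 * (suppF T).card ≤ (edgesIn G (suppF T)).card + 4 := by
  induction hT with
  | base p =>
      have : (suppF ({p} : Finset (V × V))).card ≤ 2 := by
        have : suppF ({p} : Finset (V × V)) ⊆ {p.1, p.2} := by
          intro v hv
          rw [mem_suppF] at hv
          obtain ⟨q, hq, h⟩ := hv
          simp only [Finset.mem_singleton] at hq
          subst hq
          simp only [Finset.mem_insert, Finset.mem_singleton]
          exact h
        calc (suppF ({p} : Finset (V × V))).card ≤ ({p.1, p.2} : Finset V).card :=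
              Finset.card_le_card this
          _ ≤ 2 := Finset.card_insert_le _ _ |>.trans (by simp)
      omega
  | step T q r hr h ht ih =>
      obtain ⟨hne, hqne, a11, a12, a22, a21, -, -⟩ := h
      -- square: r.1 ~ q.1 ~ r.2 ~ q.2 ~ r.1
      have hr1 : r.1 ∈ suppF T := mem_suppF.2 ⟨r, hr, Or.inl rfl⟩
      have hr2 : r.2 ∈ suppF T := mem_suppF.2 ⟨r, hr, Or.inr rfl⟩
      rw [suppF_insert]
      by_cases h1 : q.1 ∈ suppF T <;> by_cases h2 : q.2 ∈ suppF T
      · rw [Finset.insert_eq_self.2, Finset.insert_eq_self.2 h2]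
        · exact ih
        · simp [h2, h1]
      · -- q.2 new
        rw [Finset.insert_eq_self.2 (by simp [h1])]
        have := add_one G (suppF T) q.2 r.1 r.2 h2 hr1 hr2 hne a21 a22.symm
        rw [Finset.card_insert_of_notMem h2]
        omega
      · -- q.1 new
        rw [Finset.insert_comm, Finset.insert_eq_self.2 (by simp [h2])]
        have := add_one G (suppF T) q.1 r.1 r.2 h1 hr1 hr2 hne a11.symm a12
        rw [Finset.card_insert_of_notMem h1]
        omega
      · -- both new
        have s2 := add_one G (suppF T) q.2 r.1 r.2 h2 hr1 hr2 hne a21 a22.symm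
        have s1 := add_one G (insert q.2 (suppF T)) q.1 r.1 r.2
          (by simp [hqne, h1]) (Finset.mem_insert_of_mem hr1) (Finset.mem_insert_of_mem hr2)
          hne a11.symm a12
        rw [Finset.card_insert_of_notMem (by simp [hqne, h1]),
          Finset.card_insert_of_notMem h2]
        omega

end Count

section Build

variable {V : Type*} [Fintype V]

lemma reach_extend {G : SimpleGraph V} {p q : V × V}
    (h : Relation.ReflTransGen (DiagAdj G) p q) :
    ∀ T : Finset (V × V), Built G T → p ∈ T →
      (∀ r ∈ T, Relation.ReflTransGen (DiagAdj G) p r) →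
      ∃ T', Built G T' ∧ T ⊆ T' ∧ q ∈ T' ∧
        ∀ r ∈ T', Relation.ReflTransGen (DiagAdj G) p r := by
  induction h with
  | refl => exact fun T hT hp hre => ⟨T, hT, Finset.Subset.refl _, hp, hre⟩
  | tail hab hbc ih =>
      intro T hT hp hre
      obtain ⟨T', hT', hsub, hbT', hre'⟩ := ih T hT hp hre
      refine ⟨insert _ T', Built.step T' _ _ hbT' hbc hT',
        hsub.trans (Finset.subset_insert _ _), Finset.mem_insert_self _ _, ?_⟩
      intro r hrmem
      rcases Finset.mem_insert.1 hrmem with rfl | hrmem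
      · exact Relation.ReflTransGen.tail hab hbc
      · exact hre' r hrmem

lemma build_cover {G : SimpleGraph V} (p : V × V)
    (A : Finset V)
    (hA : ∀ v ∈ A, ∃ q : V × V,
      Relation.ReflTransGen (DiagAdj G) p q ∧ (v = q.1 ∨ v = q.2)) :
    ∃ T : Finset (V × V), Built G T ∧ p ∈ T ∧
      (∀ r ∈ T, Relation.ReflTransGen (DiagAdj G) p r) ∧
      ∀ v ∈ A, v ∈ suppF T := by
  classical
  induction A using Finset.induction with
  | empty =>
      exact ⟨{p}, Built.base p, Finset.mem_singleton_self p,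
        by simp only [Finset.mem_singleton]; rintro r rfl; exact .refl,
        by simp⟩
  | @insert v A hv ih =>
      obtain ⟨T, hT, hp, hre, hcov⟩ := ih (fun w hw => hA w (Finset.mem_insert_of_mem hw))
      obtain ⟨q, hq, hvq⟩ := hA v (Finset.mem_insert_self _ _)
      obtain ⟨T', hT', hsub, hqT', hre'⟩ := reach_extend hq T hT hp hre
      refine ⟨T', hT', hsub hp, hre', ?_⟩
      intro w hw
      rcases Finset.mem_insert.1 hw with rfl | hw
      · exact mem_suppF.2 ⟨q, hqT', hvq⟩
      · exact suppF_mono hsub (hcov w hw)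

end Build

/-- An incomplete CFS graph with `n ≥ 4` vertices has at least `2n − 4` edges. -/
theorem stmt7 {V : Type*} [Fintype V] (G : SimpleGraph V)
    (h4 : 4 ≤ Fintype.card V)
    (hinc : ∃ v w : V, v ≠ w ∧ ¬ G.Adj v w)
    (hcfs : CFS G) :
    2 * Fintype.card V - 4 ≤ G.edgeSet.ncard := by
  
  classical
  obtain ⟨p, ⟨q0, hpq⟩, hcov⟩ := hcfs
  have noncone_of_pair : ∀ a b : V, a ≠ b → ¬ G.Adj a b → ¬ IsCone G a := by
    intro a b hab hadj hc
    exact hadj (hc b (Ne.symm hab))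
  obtain ⟨hab, hcd, hac, hcb, hbd, hda, hnab, hncd⟩ := hpq
  set N : Finset V := Finset.univ.filter (fun v => ¬ IsCone G v) with hN
  have hmemN : ∀ v, v ∈ N ↔ ¬ IsCone G v := by intro v; simp [hN]
  obtain ⟨T, hT, hpT, hre, hcovN⟩ := build_cover p N (fun v hv => hcov v ((hmemN v).1 hv))
  have hsupp_sub : suppF T ⊆ N := by
    intro v hv
    rw [mem_suppF] at hv
    obtain ⟨r, hrT, hvr⟩ := hv
    have hsq : r.1 ≠ r.2 ∧ ¬ G.Adj r.1 r.2 := by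
      rcases (hre r hrT).cases_tail with rfl | ⟨s, -, hsr⟩
      · exact ⟨hab, hnab⟩
      · obtain ⟨-, h1, -, -, -, -, -, h2⟩ := hsr
        exact ⟨h1, h2⟩
    rw [hmemN]
    rcases hvr with rfl | rfl
    · exact noncone_of_pair _ _ hsq.1 hsq.2
    · exact noncone_of_pair _ _ hsq.1.symm (fun h => hsq.2 h.symm)
  have hsupp : suppF T = N := Finset.Subset.antisymm hsupp_sub hcovN
  have key := key_count hT
  rw [hsupp] at key
  -- `N` has at least 4 elements
  have hp1 : p.1 ∈ N := (hmemN _).2 (noncone_of_pair _ _ hab hnab)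
  have hp2 : p.2 ∈ N := (hmemN _).2
    (noncone_of_pair _ _ hab.symm (fun h => hnab h.symm))
  have hq1 : q0.1 ∈ N := (hmemN _).2 (noncone_of_pair _ _ hcd hncd)
  have hq2 : q0.2 ∈ N := (hmemN _).2
    (noncone_of_pair _ _ hcd.symm (fun h => hncd h.symm))
  have ne13 : p.1 ≠ q0.1 := G.ne_of_adj hac
  have ne14 : p.1 ≠ q0.2 := (G.ne_of_adj hda).symm
  have ne23 : p.2 ≠ q0.1 := (G.ne_of_adj hcb).symm
  have ne24 : p.2 ≠ q0.2 := G.ne_of_adj hbd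
  have h4N : 4 ≤ N.card := by
    have hsub4 : ({p.1, p.2, q0.1, q0.2} : Finset V) ⊆ N := by
      intro v hv
      simp only [Finset.mem_insert, Finset.mem_singleton] at hv
      rcases hv with rfl | rfl | rfl | rfl <;> assumption
    have hc4 : ({p.1, p.2, q0.1, q0.2} : Finset V).card = 4 := by
      rw [Finset.card_insert_of_notMem (by simp [hab, ne13, ne14]),
        Finset.card_insert_of_notMem (by simp [ne23, ne24]),
        Finset.card_pair hcd]
    calc 4 = ({p.1, p.2, q0.1, q0.2} : Finset V).card := hc4.symm
      _ ≤ N.card := Finset.card_le_card hsub4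
  -- cone vertices
  set C : Finset V := Finset.univ.filter (fun v => IsCone G v) with hC
  have hcards : C.card + N.card = Fintype.card V := by
    rw [hN, hC, ← Finset.card_univ]
    exact Finset.card_filter_add_card_filter_not _
  have hCN : ∀ v, v ∈ C → v ∉ N := by
    intro v hvC hvN
    rw [hmemN] at hvN
    exact hvN (by simpa [hC] using hvC)
  set E2 : Finset (Sym2 V) := (C ×ˢ N).image (fun z => s(z.1, z.2)) with hE2
  have hE2card : E2.card = C.card * N.card := by
    rw [hE2, Finset.card_image_of_injOn, Finset.card_product]
    rintro ⟨c, x⟩ hcx ⟨c', x'⟩ hcx' hs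
    simp only [Finset.coe_product, Set.mem_prod, Finset.mem_coe] at hcx hcx'
    rw [Sym2.eq_iff] at hs
    rcases hs with ⟨rfl, rfl⟩ | ⟨rfl, rfl⟩
    · rfl
    · exact absurd hcx'.2 (hCN _ hcx.1)
  have hE2sub : E2 ⊆ G.edgeFinset := by
    intro e he
    rw [hE2, Finset.mem_image] at he
    obtain ⟨⟨c, x⟩, hcx, rfl⟩ := he
    rw [Finset.mem_product] at hcx
    have hxc : x ≠ c := by
      intro h; exact hCN c hcx.1 (h ▸ hcx.2)
    have : G.Adj c x := by
      have hcone : IsCone G c := by simpa [hC] using hcx.1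
      exact hcone x hxc
    simpa [SimpleGraph.mem_edgeFinset] using this
  have hdisj : Disjoint (edgesIn G N) E2 := by
    rw [Finset.disjoint_left]
    intro e heN heE
    rw [hE2, Finset.mem_image] at heE
    obtain ⟨⟨c, x⟩, hcx, rfl⟩ := heE
    rw [Finset.mem_product] at hcx
    have := (Finset.mem_filter.1 heN).2 c (by simp)
    exact hCN c hcx.1 this
  have hunion : edgesIn G N ∪ E2 ⊆ G.edgeFinset := by
    apply Finset.union_subset _ hE2sub
    intro e he
    exact (Finset.mem_filter.1 he).1
  have hle : (edgesIn G N).card + E2.card ≤ G.edgeFinset.card := by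
    rw [← Finset.card_union_of_disjoint hdisj]
    exact Finset.card_le_card hunion
  have h2C : 2 * C.card ≤ E2.card := by
    rw [hE2card]
    calc 2 * C.card ≤ 4 * C.card := by omega
      _ ≤ N.card * C.card := Nat.mul_le_mul_right _ h4N
      _ = C.card * N.card := Nat.mul_comm _ _
  have hncard : G.edgeSet.ncard = G.edgeFinset.card := by
    rw [Set.ncard_eq_toFinset_card']
    congr
  rw [hncard]
  omega
end

section
/- A triangle-free graph with n vertices and strictly more than (n−1)²/4 + 1 edges is bipartite. -/
open Finset SimpleGraph

lemma key_count_s8 {V : Type*} [Fintype V] [DecidableEq V] (G : SimpleGraph V) [DecidableRel G.Adj]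
    (htf : G.CliqueFree 3) (v : V) (A B : Finset V)
    (hvA : v ∉ A) (hvB : v ∉ B)
    (hcover : ∀ x : V, x = v ∨ x ∈ A ∨ x ∈ B)
    (hdisj : Disjoint A B)
    (hA : ∀ x ∈ A, ∀ y ∈ A, ¬ G.Adj x y)
    (hB : ∀ x ∈ B, ∀ y ∈ B, ¬ G.Adj x y)
    (hs : ∃ a ∈ A, G.Adj v a) (ht : ∃ b ∈ B, G.Adj v b) :
    (#G.edgeFinset) ≤ #A * #B + 1 := by
  classical
  set Af := A.filter (G.Adj v) with hAf
  set Bf := B.filter (G.Adj v) with hBf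
  have hAfA : Af ⊆ A := filter_subset _ _
  have hBfB : Bf ⊆ B := filter_subset _ _
  have hAf1 : 1 ≤ #Af := by
    obtain ⟨a, ha, hadj⟩ := hs
    exact card_pos.2 ⟨a, mem_filter.2 ⟨ha, hadj⟩⟩
  have hBf1 : 1 ≤ #Bf := by
    obtain ⟨b, hb, hadj⟩ := ht
    exact card_pos.2 ⟨b, mem_filter.2 ⟨hb, hadj⟩⟩
  set S1 : Finset (V × V) := ({v} : Finset V) ×ˢ (Af ∪ Bf) with hS1
  set S2 : Finset (V × V) := (Af ∪ Bf) ×ˢ ({v} : Finset V) with hS2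
  set S3 : Finset (V × V) := A ×ˢ B \ Af ×ˢ Bf with hS3
  set S4 : Finset (V × V) := B ×ˢ A \ Bf ×ˢ Af with hS4
  have hsub : (univ.filter fun (x, y) => G.Adj x y) ⊆ S1 ∪ S2 ∪ S3 ∪ S4 := by
    rintro ⟨x, y⟩ hxy
    simp only [mem_filter, mem_univ, true_and] at hxy
    have hnotriangle : ∀ a b : V, G.Adj v a → G.Adj v b → ¬ G.Adj a b := by
      intro a b h1 h2 h3
      exact htf {v, a, b} (is3Clique_triple_iff.2 ⟨h1, h2, h3⟩)
    simp only [mem_union]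
    by_cases hx : x = v
    · have hxy' : G.Adj v y := hx ▸ hxy
      have : y ∈ Af ∪ Bf := by
        rcases hcover y with h | h | h
        · exact absurd (h ▸ hxy') (G.irrefl)
        · exact mem_union_left _ (mem_filter.2 ⟨h, hxy'⟩)
        · exact mem_union_right _ (mem_filter.2 ⟨h, hxy'⟩)
      exact Or.inl (Or.inl (Or.inl (mem_product.2 ⟨mem_singleton.2 hx, this⟩)))
    · by_cases hy : y = v
      · have hxy' : G.Adj v x := hy ▸ hxy.symm
        have : x ∈ Af ∪ Bf := by
          rcases hcover x with h | h | h
          · exact absurd h hx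
          · exact mem_union_left _ (mem_filter.2 ⟨h, hxy'⟩)
          · exact mem_union_right _ (mem_filter.2 ⟨h, hxy'⟩)
        exact Or.inl (Or.inl (Or.inr (mem_product.2 ⟨this, mem_singleton.2 hy⟩)))
      · have hxAB : x ∈ A ∨ x ∈ B := (hcover x).resolve_left hx
        have hyAB : y ∈ A ∨ y ∈ B := (hcover y).resolve_left hy
        rcases hxAB with hxA | hxB
        · rcases hyAB with hyA | hyB
          · exact absurd hxy (hA x hxA y hyA)
          · refine Or.inl (Or.inr (mem_sdiff.2 ⟨mem_product.2 ⟨hxA, hyB⟩, ?_⟩))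
            intro hmem
            rw [mem_product] at hmem
            exact hnotriangle x y (mem_filter.1 hmem.1).2 (mem_filter.1 hmem.2).2 hxy
        · rcases hyAB with hyA | hyB
          · refine Or.inr (mem_sdiff.2 ⟨mem_product.2 ⟨hxB, hyA⟩, ?_⟩)
            intro hmem
            rw [mem_product] at hmem
            exact hnotriangle y x (mem_filter.1 hmem.2).2 (mem_filter.1 hmem.1).2 hxy.symm
          · exact absurd hxy (hB x hxB y hyB)
  have hcard : 2 * #G.edgeFinset ≤ #(S1 ∪ S2 ∪ S3 ∪ S4) := by
    rw [G.two_mul_card_edgeFinset]; exact card_le_card hsub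
  have hU : #(S1 ∪ S2 ∪ S3 ∪ S4) ≤ #S1 + #S2 + #S3 + #S4 :=
    le_trans (card_union_le _ _) (by
      have := card_union_le (S1 ∪ S2) S3
      have := card_union_le S1 S2
      omega)
  have hdAfBf : Disjoint Af Bf := hdisj.mono hAfA hBfB
  have hS1c : #S1 = #Af + #Bf := by
    rw [hS1, card_product, card_singleton, one_mul, card_union_of_disjoint hdAfBf]
  have hS2c : #S2 = #Af + #Bf := by
    rw [hS2, card_product, card_singleton, mul_one, card_union_of_disjoint hdAfBf]
  have hS3c : #S3 = #A * #B - #Af * #Bf := by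
    rw [hS3, card_sdiff_of_subset (product_subset_product hAfA hBfB), card_product, card_product]
  have hS4c : #S4 = #B * #A - #Bf * #Af := by
    rw [hS4, card_sdiff_of_subset (product_subset_product hBfB hAfA), card_product, card_product]
  have hmul_le : #Af * #Bf ≤ #A * #B := Nat.mul_le_mul (card_le_card hAfA) (card_le_card hBfB)
  have hab : #Af + #Bf ≤ #Af * #Bf + 1 := by
    obtain ⟨a', ha'⟩ := Nat.exists_eq_add_of_le hAf1
    obtain ⟨b', hb'⟩ := Nat.exists_eq_add_of_le hBf1
    rw [ha', hb']
    nlinarith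
  have hcomm : #B * #A = #A * #B := Nat.mul_comm _ _
  have hcomm2 : #Bf * #Af = #Af * #Bf := Nat.mul_comm _ _
  rw [hcomm] at hS4c
  rw [hcomm2] at hS4c
  obtain ⟨P, hP⟩ : ∃ P, #Af * #Bf = P := ⟨_, rfl⟩
  obtain ⟨Q, hQ⟩ : ∃ Q, #A * #B = Q := ⟨_, rfl⟩
  rw [hP, hQ] at hS3c
  rw [hP, hQ] at hS4c
  rw [hP, hQ] at hmul_le
  rw [hP] at hab
  rw [hQ]
  omega

lemma count_split {V : Type*} [Fintype V] [DecidableEq V] (G : SimpleGraph V)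
    [DecidableRel G.Adj] (v : V) :
    (#G.edgeFinset) = G.degree v + #(G.induce ({v}ᶜ : Set V)).edgeFinset := by
  classical
  have h2e := G.two_mul_card_edgeFinset
  have h2e' := (G.induce ({v}ᶜ : Set V)).two_mul_card_edgeFinset
  set P : Finset (V × V) := univ.filter fun (x, y) => G.Adj x y with hP
  set P' : Finset (↥({v}ᶜ : Set V) × ↥({v}ᶜ : Set V)) :=
    univ.filter fun (x, y) => (G.induce ({v}ᶜ : Set V)).Adj x y with hP'
  set P0 : Finset (V × V) := P.filter (fun p => p.1 ≠ v ∧ p.2 ≠ v) with hP0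
  have hsplit : P = ({v} ×ˢ G.neighborFinset v) ∪ (G.neighborFinset v ×ˢ {v}) ∪ P0 := by
    ext ⟨x, y⟩
    simp only [hP, hP0, mem_filter, mem_union, mem_product, mem_singleton, mem_univ, true_and,
      mem_neighborFinset]
    constructor
    · intro hadj
      by_cases hx : x = v
      · exact Or.inl (Or.inl ⟨hx, hx ▸ hadj⟩)
      · by_cases hy : y = v
        · exact Or.inl (Or.inr ⟨hy ▸ hadj.symm, hy⟩)
        · exact Or.inr ⟨hadj, hx, hy⟩
    · rintro ((⟨hx, hadj⟩ | ⟨hadj, hy⟩) | ⟨hadj, _⟩)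
      · exact hx ▸ hadj
      · exact hy ▸ hadj.symm
      · exact hadj
  have hd1 : Disjoint ({v} ×ˢ G.neighborFinset v) (G.neighborFinset v ×ˢ {v}) := by
    rw [Finset.disjoint_left]
    rintro ⟨x, y⟩ h1 h2
    rw [mem_product, mem_singleton] at h1 h2
    rw [mem_neighborFinset] at h1
    exact G.irrefl (h2.2 ▸ h1.2)
  have hd2 : Disjoint (({v} ×ˢ G.neighborFinset v) ∪ (G.neighborFinset v ×ˢ {v})) P0 := by
    rw [Finset.disjoint_left]
    rintro ⟨x, y⟩ h1 h2
    simp only [hP0, mem_filter] at h2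
    rw [mem_union, mem_product, mem_product, mem_singleton, mem_singleton] at h1
    rcases h1 with h | h
    · exact h2.2.1 h.1
    · exact h2.2.2 h.2
  have hcards : #P = G.degree v + G.degree v + #P0 := by
    rw [hsplit, card_union_of_disjoint hd2, card_union_of_disjoint hd1,
      card_product, card_product, card_singleton, one_mul, mul_one, card_neighborFinset_eq_degree]
  have himg : P'.image (fun p => ((p.1 : V), (p.2 : V))) = P0 := by
    ext ⟨x, y⟩
    simp only [mem_image, hP', hP0, hP, mem_filter, mem_univ, true_and, comap_adj,
      Function.Embedding.coe_subtype]
    constructor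
    · rintro ⟨⟨a, b⟩, hadj, heq⟩
      obtain ⟨h1, h2⟩ := Prod.mk.injEq .. ▸ heq
      refine ⟨by rw [← h1, ← h2]; exact hadj, ?_, ?_⟩
      · rw [← h1]; exact a.2
      · rw [← h2]; exact b.2
    · rintro ⟨hadj, hx, hy⟩
      exact ⟨(⟨x, hx⟩, ⟨y, hy⟩), hadj, rfl⟩
  have hinj : Set.InjOn (fun p : ↥({v}ᶜ : Set V) × ↥({v}ᶜ : Set V) => ((p.1 : V), (p.2 : V))) P' := by
    rintro ⟨a, b⟩ _ ⟨c, d⟩ _ h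
    obtain ⟨h1, h2⟩ := Prod.mk.injEq .. ▸ h
    exact Prod.ext (Subtype.ext h1) (Subtype.ext h2)
  have hP0card : #P0 = #P' := by rw [← himg, card_image_of_injOn hinj]
  omega

lemma ab_bound (a b e n : ℕ) (h : e ≤ a * b + 1) (hab : a + b + 1 = n) :
    (e : ℝ) ≤ ((n : ℝ) - 1) ^ 2 / 4 + 1 := by
  have h1 : (e : ℝ) ≤ (a : ℝ) * (b : ℝ) + 1 := by exact_mod_cast h
  have h2 : (n : ℝ) = (a : ℝ) + (b : ℝ) + 1 := by exact_mod_cast hab.symm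
  nlinarith [sq_nonneg ((a : ℝ) - (b : ℝ))]

universe u

lemma main_bound : ∀ (n : ℕ) {V : Type u} [Fintype V] [DecidableEq V] (G : SimpleGraph V)
    [DecidableRel G.Adj], Fintype.card V = n → G.CliqueFree 3 → ¬ G.Colorable 2 →
    (#G.edgeFinset : ℝ) ≤ ((n : ℝ) - 1) ^ 2 / 4 + 1 := by
  intro n
  induction n using Nat.strong_induction_on with
  | _ n IH =>
  intro V _ _ G _ hn htf hc
  have fin2 : ∀ i : Fin 2, i = 0 ∨ i = 1 := by decide
  have hnt : ∀ a b c : V, G.Adj a b → G.Adj a c → G.Adj b c → False := by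
    intro a b c h1 h2 h3
    exact htf {a, b, c} (is3Clique_triple_iff.2 ⟨h1, h2, h3⟩)
  by_cases hmin : ∃ v : V, 2 * G.degree v + 2 ≤ n
  · obtain ⟨v, hv⟩ := hmin
    have hn2 : 2 ≤ n := by omega
    set G' := G.induce ({v}ᶜ : Set V) with hG'
    have hsplit := count_split G v
    have hcard' : Fintype.card ↥({v}ᶜ : Set V) = n - 1 := by
      rw [Fintype.card_compl_set, Set.card_singleton, hn]
    have htf' : G'.CliqueFree 3 := htf.comap (SimpleGraph.Embedding.induce ({v}ᶜ : Set V)).isContained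
    by_cases hcol : G'.Colorable 2
    · obtain ⟨C⟩ := hcol
      set c : V → Fin 2 := fun x => if h : x = v then 0 else C ⟨x, h⟩ with hcdef
      have hcvalid : ∀ x y, x ≠ v → y ≠ v → G.Adj x y → c x ≠ c y := by
        intro x y hx hy hadj
        simp only [hcdef, dif_neg hx, dif_neg hy]
        exact C.valid (by exact hadj)
      set A : Finset V := univ.filter (fun x => x ≠ v ∧ c x = 0) with hAdef
      set B : Finset V := univ.filter (fun x => x ≠ v ∧ c x = 1) with hBdef
      have hmemA : ∀ x, x ∈ A ↔ x ≠ v ∧ c x = 0 := by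
        intro x; simp [hAdef]
      have hmemB : ∀ x, x ∈ B ↔ x ≠ v ∧ c x = 1 := by
        intro x; simp [hBdef]
      have hcover : ∀ x : V, x = v ∨ x ∈ A ∨ x ∈ B := by
        intro x
        by_cases hx : x = v
        · exact Or.inl hx
        · rcases fin2 (c x) with h | h
          · exact Or.inr (Or.inl ((hmemA x).2 ⟨hx, h⟩))
          · exact Or.inr (Or.inr ((hmemB x).2 ⟨hx, h⟩))
      have hdisj : Disjoint A B := by
        rw [Finset.disjoint_left]
        intro x hxA hxB
        rw [hmemA] at hxA; rw [hmemB] at hxB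
        rw [hxA.2] at hxB
        exact absurd hxB.2 (by decide)
      have hindA : ∀ x ∈ A, ∀ y ∈ A, ¬ G.Adj x y := by
        intro x hx y hy hadj
        rw [hmemA] at hx hy
        exact hcvalid x y hx.1 hy.1 hadj (hx.2.trans hy.2.symm)
      have hindB : ∀ x ∈ B, ∀ y ∈ B, ¬ G.Adj x y := by
        intro x hx y hy hadj
        rw [hmemB] at hx hy
        exact hcvalid x y hx.1 hy.1 hadj (hx.2.trans hy.2.symm)
      have hcardsum : #A + #B + 1 = n := by
        have hun : A ∪ B = ({v} : Finset V)ᶜ := by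
          ext x
          rw [mem_union, mem_compl, mem_singleton, hmemA, hmemB]
          constructor
          · rintro (h | h) <;> exact h.1
          · intro hx
            rcases fin2 (c x) with h | h
            · exact Or.inl ⟨hx, h⟩
            · exact Or.inr ⟨hx, h⟩
        have := card_union_of_disjoint hdisj
        rw [hun, card_compl, card_singleton, hn] at this
        omega
      by_cases hsA : ∃ a ∈ A, G.Adj v a
      · by_cases hsB : ∃ b ∈ B, G.Adj v b
        · have hkey := key_count_s8 G htf v A B (by simp [hmemA]) (by simp [hmemB])
            hcover hdisj hindA hindB hsA hsB
          exact ab_bound _ _ _ _ hkey hcardsum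
        · exfalso
          refine hc ⟨Coloring.mk (fun x => if x = v then 1 else c x) ?_⟩
          intro x y hadj
          by_cases hx : x = v
          · have hy : y ≠ v := fun h => G.irrefl (h ▸ hx ▸ hadj)
            have hyB : y ∉ B := fun hB => hsB ⟨y, hB, hx ▸ hadj⟩
            have hyA : y ∈ A := ((hcover y).resolve_left hy).resolve_right hyB
            rw [if_pos hx, if_neg hy, ((hmemA y).1 hyA).2]
            decide
          · by_cases hy : y = v
            · have hxB : x ∉ B := fun hB => hsB ⟨x, hB, hy ▸ hadj.symm⟩
              have hxA : x ∈ A := ((hcover x).resolve_left hx).resolve_right hxB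
              rw [if_neg hx, if_pos hy, ((hmemA x).1 hxA).2]
              decide
            · rw [if_neg hx, if_neg hy]
              exact hcvalid x y hx hy hadj
      · exfalso
        refine hc ⟨Coloring.mk (fun x => if x = v then 0 else c x) ?_⟩
        intro x y hadj
        by_cases hx : x = v
        · have hy : y ≠ v := fun h => G.irrefl (h ▸ hx ▸ hadj)
          have hyA : y ∉ A := fun hA => hsA ⟨y, hA, hx ▸ hadj⟩
          have hyB : y ∈ B := ((hcover y).resolve_left hy).resolve_left hyA
          rw [if_pos hx, if_neg hy, ((hmemB y).1 hyB).2]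
          decide
        · by_cases hy : y = v
          · have hxA : x ∉ A := fun hA => hsA ⟨x, hA, hy ▸ hadj.symm⟩
            have hxB : x ∈ B := ((hcover x).resolve_left hx).resolve_left hxA
            rw [if_neg hx, if_pos hy, ((hmemB x).1 hxB).2]
            decide
          · rw [if_neg hx, if_neg hy]
            exact hcvalid x y hx hy hadj
    · have hb' := IH (n - 1) (by omega) G' hcard' htf' hcol
      have hn1 : ((n - 1 : ℕ) : ℝ) = (n : ℝ) - 1 := by
        have : 1 ≤ n := by omega
        push_cast [this]; ring
      rw [hn1] at hb'
      have hcast : (#G.edgeFinset : ℝ) = (G.degree v : ℝ) + (#G'.edgeFinset : ℝ) := by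
        exact_mod_cast hsplit
      have hdeg : 2 * (G.degree v : ℝ) + 2 ≤ (n : ℝ) := by exact_mod_cast hv
      rw [hcast]
      nlinarith
  · push_neg at hmin
    by_cases hne : G.edgeFinset.Nonempty
    · obtain ⟨e, he⟩ := hne
      rw [mem_edgeFinset] at he
      obtain ⟨u, v, hadj⟩ : ∃ u v : V, G.Adj u v := by
        revert he
        induction e using Sym2.ind with
        | _ x y => exact fun h => ⟨x, y, G.mem_edgeSet.1 h⟩
      have hn1 : 1 ≤ n := by rw [← hn]; exact Fintype.card_pos_iff.2 ⟨u⟩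
      set A := G.neighborFinset u with hAdef
      set B := G.neighborFinset v with hBdef
      have hmemA : ∀ x, x ∈ A ↔ G.Adj u x := fun x => mem_neighborFinset ..
      have hmemB : ∀ x, x ∈ B ↔ G.Adj v x := fun x => mem_neighborFinset ..
      have hdisj : Disjoint A B := by
        rw [Finset.disjoint_left]
        intro x hxA hxB
        exact hnt u v x hadj ((hmemA x).1 hxA) ((hmemB x).1 hxB)
      have hindA : ∀ x ∈ A, ∀ y ∈ A, ¬ G.Adj x y := by
        intro x hx y hy h
        exact hnt u x y ((hmemA x).1 hx) ((hmemA y).1 hy) h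
      have hindB : ∀ x ∈ B, ∀ y ∈ B, ¬ G.Adj x y := by
        intro x hx y hy h
        exact hnt v x y ((hmemB x).1 hx) ((hmemB y).1 hy) h
      have hAc : n < 2 * #A + 2 := by
        rw [hAdef, card_neighborFinset_eq_degree]; exact hmin u
      have hBc : n < 2 * #B + 2 := by
        rw [hBdef, card_neighborFinset_eq_degree]; exact hmin v
      have hUcard : #(A ∪ B) = #A + #B := card_union_of_disjoint hdisj
      have hUn : #(A ∪ B) ≤ n := by rw [← hn]; exact card_le_univ _
      by_cases hUuniv : A ∪ B = univ
      · exfalso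
        refine hc ⟨Coloring.mk (fun x => if x ∈ A then 0 else 1) ?_⟩
        intro x y hxy
        by_cases hx : x ∈ A
        · by_cases hy : y ∈ A
          · exact absurd hxy (hindA x hx y hy)
          · rw [if_pos hx, if_neg hy]; decide
        · by_cases hy : y ∈ A
          · rw [if_neg hx, if_pos hy]; decide
          · have hxB : x ∈ B := by
              have : x ∈ A ∪ B := hUuniv ▸ mem_univ x
              exact (mem_union.1 this).resolve_left hx
            have hyB : y ∈ B := by
              have : y ∈ A ∪ B := hUuniv ▸ mem_univ y
              exact (mem_union.1 this).resolve_left hy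
            exact absurd hxy (hindB x hxB y hyB)
      · have hUne : #(A ∪ B) ≠ n := fun h => hUuniv (by rwa [← hn, card_eq_iff_eq_univ] at h)
        have hUeq : #(A ∪ B) = n - 1 := by omega
        have hcompl : #(A ∪ B)ᶜ = 1 := by rw [card_compl, hn, hUeq]; omega
        obtain ⟨w, hw⟩ := card_eq_one.1 hcompl
        have hwU : w ∉ A ∪ B := by
          have : w ∈ (A ∪ B)ᶜ := hw ▸ mem_singleton_self w
          exact mem_compl.1 this
        have hwA : w ∉ A := fun h => hwU (mem_union_left _ h)
        have hwB : w ∉ B := fun h => hwU (mem_union_right _ h)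
        have hcover : ∀ x : V, x = w ∨ x ∈ A ∨ x ∈ B := by
          intro x
          by_cases hx : x ∈ A ∪ B
          · exact Or.inr (mem_union.1 hx)
          · left
            have : x ∈ (A ∪ B)ᶜ := mem_compl.2 hx
            rw [hw, mem_singleton] at this
            exact this
        by_cases hsA : ∃ a ∈ A, G.Adj w a
        · by_cases hsB : ∃ b ∈ B, G.Adj w b
          · have hkey := key_count_s8 G htf w A B hwA hwB hcover hdisj hindA hindB hsA hsB
            exact ab_bound _ _ _ _ hkey (by omega)
          · exfalso
            refine hc ⟨Coloring.mk (fun x => if x ∈ A then 0 else 1) ?_⟩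
            intro x y hxy
            by_cases hx : x ∈ A
            · by_cases hy : y ∈ A
              · exact absurd hxy (hindA x hx y hy)
              · rw [if_pos hx, if_neg hy]; decide
            · by_cases hy : y ∈ A
              · rw [if_neg hx, if_pos hy]; decide
              · exfalso
                rcases hcover x with hxw | hxA' | hxB
                · rcases hcover y with hyw | hyA' | hyB
                  · subst hxw; subst hyw; exact G.irrefl hxy
                  · exact hy hyA'
                  · subst hxw; exact hsB ⟨y, hyB, hxy⟩
                · exact hx hxA'
                · rcases hcover y with hyw | hyA' | hyB
                  · subst hyw; exact hsB ⟨x, hxB, hxy.symm⟩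
                  · exact hy hyA'
                  · exact hindB x hxB y hyB hxy
        · exfalso
          refine hc ⟨Coloring.mk (fun x => if x ∈ B then 1 else 0) ?_⟩
          intro x y hxy
          by_cases hx : x ∈ B
          · by_cases hy : y ∈ B
            · exact absurd hxy (hindB x hx y hy)
            · rw [if_pos hx, if_neg hy]; decide
          · by_cases hy : y ∈ B
            · rw [if_neg hx, if_pos hy]; decide
            · exfalso
              rcases hcover x with hxw | hxA | hxB'
              · rcases hcover y with hyw | hyA | hyB'
                · subst hxw; subst hyw; exact G.irrefl hxy
                · subst hxw; exact hsA ⟨y, hyA, hxy⟩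
                · exact hy hyB'
              · rcases hcover y with hyw | hyA | hyB'
                · subst hyw; exact hsA ⟨x, hxA, hxy.symm⟩
                · exact hindA x hxA y hyA hxy
                · exact hy hyB'
              · exact hx hxB'
    · rw [not_nonempty_iff_eq_empty] at hne
      rw [hne]
      simp only [card_empty, Nat.cast_zero]
      positivity

/-- A triangle-free graph with `n` vertices and strictly more than `(n−1)²/4 + 1` edges
is bipartite. -/
theorem stmt8 {V : Type*} [Fintype V] (G : SimpleGraph V)
    (htf : G.CliqueFree 3)
    (h : ((Fintype.card V : ℝ) - 1) ^ 2 / 4 + 1 < (G.edgeSet.ncard : ℝ)) :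
    G.Colorable 2 := by
  classical
  by_contra hc
  have hb := main_bound (Fintype.card V) G rfl htf hc
  have hcard : G.edgeSet.ncard = #G.edgeFinset := by
    rw [Set.ncard_eq_toFinset_card' G.edgeSet]
    congr 1
  rw [hcard] at h
  linarith
end

section
/- Let Γ be an incomplete triangle-free graph that is connected with no cut vertex, and let v be a vertex of Γ. If w is a vertex of Γ with lk(w) ⊊ lk(v) (w is a proper satellite of v), then in the link double D°_v(Γ) the two copies (w,0) and (w,1) of w are twins, and more generally the twin module of w in Γ gives rise to a single twin module of D°_v(Γ) of twice the size, namely M_Γ(w)×{0,1}. -/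
/-- The link double `D°_v(Γ)`: two copies of `Γ` identified along `lk(v)` (represented by
the copies `(w, false)` for `w ∈ lk(v)`), with both copies of `v` removed. -/
def LinkDouble {V : Type*} (G : SimpleGraph V) (v : V) :
    SimpleGraph {p : V × Bool // p.1 ≠ v ∧ (G.Adj v p.1 → p.2 = false)} where
  Adj p q := G.Adj p.1.1 q.1.1 ∧ (p.1.2 = q.1.2 ∨ G.Adj v p.1.1 ∨ G.Adj v q.1.1)
  symm := ⟨by
    rintro p q ⟨h1, h2⟩
    refine ⟨h1.symm, ?_⟩
    rcases h2 with h | h | h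
    · exact Or.inl h.symm
    · exact Or.inr (Or.inr h)
    · exact Or.inr (Or.inl h)⟩
  loopless := ⟨fun p h => G.irrefl h.1⟩

lemma linkDouble_adj {V : Type*} (G : SimpleGraph V) (v : V)
    (p q : {p : V × Bool // p.1 ≠ v ∧ (G.Adj v p.1 → p.2 = false)}) :
    (LinkDouble G v).Adj p q ↔
      G.Adj p.1.1 q.1.1 ∧ (p.1.2 = q.1.2 ∨ G.Adj v p.1.1 ∨ G.Adj v q.1.1) := Iff.rfl

/-- Let `Γ` be an incomplete triangle-free graph, connected without cut vertices, and let
`w` be a proper satellite of `v` (`lk(w) ⊊ lk(v)`). Then in `D°_v(Γ)` the two copies of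
`w` are twins, and the twin module of `(w,0)` in `D°_v(Γ)` is exactly `M_Γ(w) × {0,1}`. -/
theorem stmt10 {V : Type*} [Fintype V] (G : SimpleGraph V)
    (hinc : ∃ x y : V, x ≠ y ∧ ¬ G.Adj x y)
    (htf : G.CliqueFree 3)
    (hconn : G.Connected)
    (hnocut : ∀ u : V, (G.induce {x : V | x ≠ u}).Connected)
    (v w : V) (hw : G.neighborSet w ⊂ G.neighborSet v) :
    (∀ p q : {p : V × Bool // p.1 ≠ v ∧ (G.Adj v p.1 → p.2 = false)},
        p.1.1 = w → q.1.1 = w →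
        (LinkDouble G v).neighborSet p = (LinkDouble G v).neighborSet q) ∧
    (∀ p : {p : V × Bool // p.1 ≠ v ∧ (G.Adj v p.1 → p.2 = false)}, p.1.1 = w →
      ∀ q : {p : V × Bool // p.1 ≠ v ∧ (G.Adj v p.1 → p.2 = false)},
        ((LinkDouble G v).neighborSet q = (LinkDouble G v).neighborSet p ↔
          G.neighborSet q.1.1 = G.neighborSet w)) := by
  classical
  -- every neighbor of `w` is a neighbor of `v`
  have hsub : ∀ x, G.Adj w x → G.Adj v x := fun x hx => hw.1 hx
  -- `v` and `w` are not adjacent (else `v ∈ lk(w) ⊆ lk(v)`)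
  have hWV : ¬ G.Adj v w := fun h => G.irrefl (hsub v h.symm)
  -- `w` has a neighbor, by connectivity and `|V| ≥ 2`
  have hy0 : ∃ y, G.Adj w y := by
    obtain ⟨a, b, hab, -⟩ := hinc
    have hz : ∃ z, z ≠ w := by
      by_cases h : a = w
      · exact ⟨b, fun hb => hab (by rw [h, hb])⟩
      · exact ⟨a, h⟩
    obtain ⟨z, hzw⟩ := hz
    obtain ⟨pw⟩ := hconn.preconnected w z
    cases pw with
    | nil => exact absurd rfl (Ne.symm hzw)
    | cons h _ => exact ⟨_, h⟩
  -- key: the neighbor set of any copy of `w` is all copies of neighbors of `w`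
  have key : ∀ p : {p : V × Bool // p.1 ≠ v ∧ (G.Adj v p.1 → p.2 = false)}, p.1.1 = w →
      (LinkDouble G v).neighborSet p = {r | G.Adj w r.1.1} := by
    intro p hp
    ext r
    simp only [SimpleGraph.mem_neighborSet, Set.mem_setOf_eq, linkDouble_adj]
    constructor
    · intro h
      have := h.1; rwa [hp] at this
    · intro h
      exact ⟨by rw [hp]; exact h, Or.inr (Or.inr (hsub _ h))⟩
  refine ⟨fun p q hp hq => (key p hp).trans (key q hq).symm, ?_⟩
  intro p hp q
  constructor
  · -- N_D(q) = N_D(p) → lk(q.1.1) = lk(w)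
    intro hEq
    have hset : (LinkDouble G v).neighborSet q = {r | G.Adj w r.1.1} :=
      hEq.trans (key p hp)
    have hmem : ∀ r, (LinkDouble G v).Adj q r ↔ G.Adj w r.1.1 := by
      intro r
      rw [← SimpleGraph.mem_neighborSet, hset]; rfl
    set u := q.1.1 with hu
    -- step A: every neighbor of `w` is a neighbor of `u`
    have stepA : ∀ y, G.Adj w y → G.Adj u y := by
      intro y hy
      have hyv : y ≠ v := by
        rintro rfl; exact hWV hy.symm
      exact ((hmem ⟨(y, false), hyv, fun _ => rfl⟩).2 hy).1
    -- step B: `u` and `v` are not adjacent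
    have stepB : ¬ G.Adj u v := by
      intro huv
      obtain ⟨y0, hy0⟩ := hy0
      exact htf {v, u, y0} (SimpleGraph.is3Clique_triple_iff.mpr
        ⟨huv.symm, hsub _ hy0, stepA _ hy0⟩)
    -- step C: every neighbor of `u` is a neighbor of `w`
    have stepC : ∀ x, G.Adj u x → G.Adj w x := by
      intro x hx
      have hxv : x ≠ v := by rintro rfl; exact stepB hx
      by_cases hvx : G.Adj v x
      · exact (hmem ⟨(x, false), hxv, fun _ => rfl⟩).1 ⟨hx, Or.inr (Or.inr hvx)⟩
      · exact (hmem ⟨(x, q.1.2), hxv, fun h => absurd h hvx⟩).1 ⟨hx, Or.inl rfl⟩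
    ext x
    simp only [SimpleGraph.mem_neighborSet]
    exact ⟨stepC x, stepA x⟩
  · -- lk(q.1.1) = lk(w) → N_D(q) = N_D(p)
    intro hNe
    have hux : ∀ x, G.Adj q.1.1 x ↔ G.Adj w x := fun x => by
      rw [← SimpleGraph.mem_neighborSet, hNe, SimpleGraph.mem_neighborSet]
    rw [key p hp]
    ext r
    simp only [SimpleGraph.mem_neighborSet, Set.mem_setOf_eq, linkDouble_adj]
    constructor
    · intro h
      exact (hux _).1 h.1
    · intro h
      exact ⟨(hux _).2 h, Or.inr (Or.inr (hsub _ h))⟩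
end

section
/- Let Δ be a finite simple graph that is connected, triangle-free, twin-free, has at least two vertices, and let ω be a weight function on vertices of Δ taking the value 1 only on leaves, with the additional condition that if Δ is a single edge then ω never takes the value 1. Then the blow-up graph Δ^ω is triangle-free, and every vertex of Δ^ω lies in an induced 4-cycle. -/
open SimpleGraph

/-- The blow-up graph `Δ^ω`: each vertex `v` is replaced by `ω v` copies, with copies of
`v` and `w` adjacent iff `v` and `w` are adjacent. -/
def Blowup {V : Type*} (G : SimpleGraph V) (ω : V → ℕ) : SimpleGraph (Σ v : V, Fin (ω v)) where
  Adj p q := G.Adj p.1 q.1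
  symm := ⟨fun _ _ h => G.adj_symm h⟩
  loopless := ⟨fun p h => G.irrefl h⟩

lemma walk_lemma {V : Type*} {G : SimpleGraph V} {v u : V}
    (hv : G.neighborSet v = {u}) (hu : G.neighborSet u = {v}) :
    ∀ {a x : V} (_ : G.Walk a x), (a = v ∨ a = u) → (x = v ∨ x = u) := by
  intro a x p
  induction p with
  | nil => exact id
  | @cons a b c h p ih =>
      rintro (rfl | rfl)
      · have hb : b ∈ G.neighborSet a := h
        rw [hv] at hb
        exact ih (Or.inr hb)
      · have hb : b ∈ G.neighborSet a := h
        rw [hu] at hb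
        exact ih (Or.inl hb)

lemma sigma_snd_ne {V : Type*} {ω : V → ℕ} {v : V} {a b : Fin (ω v)} (h : a ≠ b) :
    (⟨v, a⟩ : Σ v, Fin (ω v)) ≠ ⟨v, b⟩ := by
  intro he
  exact h (by simpa using he)

lemma sigma_fst_ne {V : Type*} {ω : V → ℕ} {v w : V} {a : Fin (ω v)} {b : Fin (ω w)}
    (h : v ≠ w) : (⟨v, a⟩ : Σ v, Fin (ω v)) ≠ ⟨w, b⟩ := by
  intro he
  exact h (congrArg Sigma.fst he)

/-- If `Δ` is connected, triangle-free, twin-free, with at least two vertices, `ω` takes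
the value `1` only on leaves, and `ω` never takes the value `1` if `Δ` is a single edge,
then the blow-up `Δ^ω` is triangle-free and every vertex lies in an induced 4-cycle. -/
theorem stmt12 {V : Type*} [Fintype V] (G : SimpleGraph V) (ω : V → ℕ)
    (hpos : ∀ v, 0 < ω v)
    (hconn : G.Connected)
    (htf : G.CliqueFree 3)
    (htwinfree : ∀ u v : V, G.neighborSet u = G.neighborSet v → u = v)
    (hcard : 2 ≤ Fintype.card V)
    (hleaf : ∀ v : V, ω v = 1 → ∃ u : V, G.neighborSet v = {u})
    (hedge : (∃ a b : V, a ≠ b ∧ G.Adj a b ∧ ∀ x : V, x = a ∨ x = b) → ∀ v, ω v ≠ 1) :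
    (Blowup G ω).CliqueFree 3 ∧
    ∀ p : Σ v : V, Fin (ω v), ∃ q r s, IsInducedSquare (Blowup G ω) p q r s := by
  classical
  -- any two neighbors of a vertex are non-adjacent (triangle-freeness)
  have hnadj : ∀ {a x y : V}, G.Adj a x → G.Adj a y → ¬ G.Adj x y := by
    intro a x y hax hay hxy
    exact htf {a, x, y} (is3Clique_triple_iff.mpr ⟨hax, hay, hxy⟩)
  -- every vertex has a neighbor
  have hnb : ∀ w : V, ∃ x, G.Adj w x := by
    intro w
    obtain ⟨w', hw'⟩ := Fintype.exists_ne_of_one_lt_card hcard w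
    obtain ⟨p⟩ := hconn.preconnected w w'
    cases p with
    | nil => exact absurd rfl hw'
    | cons h _ => exact ⟨_, h⟩
  -- single-edge detection
  have hse : ∀ {a b : V}, G.neighborSet a = {b} → G.neighborSet b = {a} →
      ∀ x : V, x = a ∨ x = b := by
    intro a b ha hb x
    obtain ⟨p⟩ := hconn.preconnected a x
    exact walk_lemma ha hb p (Or.inl rfl)
  constructor
  · intro s hs
    rw [is3Clique_iff] at hs
    obtain ⟨a, b, c, hab, hac, hbc, -⟩ := hs
    exact htf {a.1, b.1, c.1} (is3Clique_triple_iff.mpr ⟨hab, hac, hbc⟩)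
  · rintro ⟨v, i⟩
    by_cases h1 : ω v = 1
    · -- v is a leaf with neighbor u
      obtain ⟨u, hu⟩ := hleaf v h1
      have hadj_vu : G.Adj v u := by
        have : u ∈ G.neighborSet v := by rw [hu]; exact rfl
        exact this
      have hNu : ¬ G.neighborSet u = {v} := by
        intro hw
        exact hedge ⟨v, u, G.ne_of_adj hadj_vu, hadj_vu, hse hu hw⟩ v h1
      have h2u : 2 ≤ ω u := by
        have : ω u ≠ 1 := by
          intro h1u
          obtain ⟨w, hw⟩ := hleaf u h1u
          have hvw : v ∈ G.neighborSet u := hadj_vu.symm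
          rw [hw] at hvw
          have hwv : w = v := (Set.eq_of_mem_singleton hvw).symm
          rw [hwv] at hw
          exact hNu hw
        have := hpos u
        omega
      have hx : ∃ x, G.Adj u x ∧ x ≠ v := by
        by_contra hno
        push_neg at hno
        apply hNu
        ext x
        simp only [mem_neighborSet, Set.mem_singleton_iff]
        constructor
        · exact fun h => hno x h
        · rintro rfl; exact hadj_vu.symm
      obtain ⟨x, hux, hxv⟩ := hx
      refine ⟨⟨x, ⟨0, hpos x⟩⟩, ⟨u, ⟨0, by omega⟩⟩, ⟨u, ⟨1, by omega⟩⟩,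
        sigma_fst_ne (fun h => hxv h.symm), sigma_snd_ne (by simp [Fin.ext_iff]),
        hadj_vu, hux, hux.symm, hadj_vu.symm, ?_, ?_⟩
      · intro h
        have hxu : x ∈ G.neighborSet v := h
        rw [hu] at hxu
        exact G.ne_of_adj hux.symm (Set.eq_of_mem_singleton hxu)
      · exact G.loopless.irrefl u
    · -- ω v ≥ 2
      have h2v : 2 ≤ ω v := by have := hpos v; omega
      obtain ⟨j, hj⟩ := Fintype.exists_ne_of_one_lt_card
        (by rw [Fintype.card_fin]; omega : 1 < Fintype.card (Fin (ω v))) i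
      obtain ⟨u, hu⟩ := hnb v
      by_cases hdeg : ∃ y, G.Adj v y ∧ y ≠ u
      · obtain ⟨y, hvy, hyu⟩ := hdeg
        exact ⟨⟨v, j⟩, ⟨u, ⟨0, hpos u⟩⟩, ⟨y, ⟨0, hpos y⟩⟩,
          sigma_snd_ne (fun h => hj h.symm), sigma_fst_ne (fun h => hyu h.symm),
          hu, hu.symm, hvy, hvy.symm, G.loopless.irrefl v, hnadj hu hvy⟩
      · push_neg at hdeg
        have hNv : G.neighborSet v = {u} := by
          ext x
          simp only [mem_neighborSet, Set.mem_singleton_iff]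
          exact ⟨fun h => hdeg x h, fun h => h ▸ hu⟩
        have h2u : 2 ≤ ω u := by
          have : ω u ≠ 1 := by
            intro h1u
            obtain ⟨w, hw⟩ := hleaf u h1u
            have hvw : v ∈ G.neighborSet u := hu.symm
            rw [hw] at hvw
            have hwv : w = v := (Set.eq_of_mem_singleton hvw).symm
            rw [hwv] at hw
            exact hedge ⟨v, u, G.ne_of_adj hu, hu, hse hNv hw⟩ u h1u
          have := hpos u
          omega
        exact ⟨⟨v, j⟩, ⟨u, ⟨0, by omega⟩⟩, ⟨u, ⟨1, by omega⟩⟩,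
          sigma_snd_ne (fun h => hj h.symm), sigma_snd_ne (by simp [Fin.ext_iff]),
          hu, hu.symm, hu, hu.symm, G.loopless.irrefl v, G.loopless.irrefl u⟩
end

section
/- Let W_Γ be a right-angled Coxeter group with Davis complex Σ_Γ, and let A, B be subsets of the vertices of Γ with Σ_B ⊆ Σ_A. Then Σ_A and Σ_B are at finite Hausdorff distance if and only if A = B ∪ C with C a clique all of whose vertices are adjacent to every vertex of B and to each other (i.e., A is the join B * C of B with a clique C). -/
/-- The defining relators of the right-angled Coxeter group on `G`: squares of generators
and commutators of adjacent generators. -/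
def racgRels {V : Type*} (G : SimpleGraph V) : Set (FreeGroup V) :=
  {r | (∃ v : V, r = FreeGroup.of v * FreeGroup.of v) ∨
    (∃ v w : V, G.Adj v w ∧
      r = FreeGroup.of v * FreeGroup.of w * (FreeGroup.of v)⁻¹ * (FreeGroup.of w)⁻¹)}

/-- The right-angled Coxeter group `W_Γ`. -/
abbrev RACG {V : Type*} (G : SimpleGraph V) := PresentedGroup (racgRels G)

/-- The standard generator of `W_Γ` corresponding to a vertex. -/
def racgGen {V : Type*} (G : SimpleGraph V) (v : V) : RACG G := PresentedGroup.of v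

/-- `g` has word length at most `n` with respect to the standard generators
(each of which is its own inverse). -/
def racgWordLenLe {V : Type*} (G : SimpleGraph V) (n : ℕ) (g : RACG G) : Prop :=
  ∃ l : List V, l.length ≤ n ∧ (l.map (racgGen G)).prod = g

section Aux

variable {V : Type*} (G : SimpleGraph V)

lemma racg_rel_one {r : FreeGroup V} (hr : r ∈ racgRels G) :
    PresentedGroup.mk (racgRels G) r = 1 := by
  exact (QuotientGroup.eq_one_iff r).2 (Subgroup.subset_normalClosure hr)

lemma racg_sq (v : V) : racgGen G v * racgGen G v = 1 := by
  have h : (FreeGroup.of v * FreeGroup.of v) ∈ racgRels G := Or.inl ⟨v, rfl⟩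
  have h2 := racg_rel_one G h
  rw [map_mul] at h2
  exact h2

lemma racg_inv (v : V) : (racgGen G v)⁻¹ = racgGen G v :=
  inv_eq_of_mul_eq_one_right (racg_sq G v)

lemma racg_comm {v w : V} (h : G.Adj v w) : Commute (racgGen G v) (racgGen G w) := by
  have hr : (FreeGroup.of v * FreeGroup.of w * (FreeGroup.of v)⁻¹ * (FreeGroup.of w)⁻¹)
      ∈ racgRels G := Or.inr ⟨v, w, h, rfl⟩
  have h2 := racg_rel_one G hr
  rw [map_mul, map_mul, map_mul, map_inv, map_inv] at h2
  exact commutatorElement_eq_one_iff_commute.mp h2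

/-- The negation involution of `ℤ`. -/
def negE : Equiv.Perm ℤ :=
  ⟨fun x => -x, fun x => -x, fun x => neg_neg x, fun x => neg_neg x⟩

/-- The reflection `x ↦ 2 - x` of `ℤ`. -/
def refE : Equiv.Perm ℤ :=
  ⟨fun x => 2 - x, fun x => 2 - x, fun x => sub_sub_cancel 2 x, fun x => sub_sub_cancel 2 x⟩

@[simp] lemma negE_apply (x : ℤ) : negE x = -x := rfl
@[simp] lemma refE_apply (x : ℤ) : refE x = 2 - x := rfl

lemma negE_sq : negE * negE = 1 := by
  ext x; simp [Equiv.Perm.mul_apply]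

lemma refE_sq : refE * refE = 1 := by
  ext x; simp [Equiv.Perm.mul_apply]

lemma refE_inv : refE⁻¹ = refE := inv_eq_of_mul_eq_one_right refE_sq

/-- If `u, v ∈ A` are distinct non-adjacent vertices with `u ∉ B`, then `W_A` is not within
bounded distance of `W_B`. -/
lemma forward_aux (A B : Set V) {u v : V}
    (hu : u ∈ A) (hv : v ∈ A) (huB : u ∉ B) (huv : u ≠ v) (hadj : ¬ G.Adj u v)
    (N : ℕ)
    (H : ∀ g ∈ Subgroup.closure (racgGen G '' A),
        ∃ h ∈ Subgroup.closure (racgGen G '' B), racgWordLenLe G N (h⁻¹ * g)) : False := by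
  classical
  set f : V → Equiv.Perm ℤ := fun w => if w = u then negE else if w = v then refE else 1 with hf
  have hfval : ∀ w : V, f w = negE ∨ f w = refE ∨ f w = 1 := by
    intro w
    rw [hf]; dsimp only
    by_cases h1 : w = u
    · rw [if_pos h1]; exact Or.inl rfl
    · rw [if_neg h1]
      by_cases h2 : w = v
      · rw [if_pos h2]; exact Or.inr (Or.inl rfl)
      · rw [if_neg h2]; exact Or.inr (Or.inr rfl)
  have hfu : f u = negE := by rw [hf]; dsimp only; rw [if_pos rfl]
  have hfv : f v = refE := by rw [hf]; dsimp only; rw [if_neg (Ne.symm huv), if_pos rfl]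
  have hf1 : ∀ w : V, w ≠ u → w ≠ v → f w = 1 := by
    intro w h1 h2
    rw [hf]; dsimp only; rw [if_neg h1, if_neg h2]
  have hfsq : ∀ w : V, f w * f w = 1 := by
    intro w
    rcases hfval w with h | h | h <;> rw [h]
    · exact negE_sq
    · exact refE_sq
    · exact one_mul 1
  have hrels : ∀ r ∈ racgRels G, FreeGroup.lift f r = 1 := by
    rintro r (⟨w, rfl⟩ | ⟨a, b, hab, rfl⟩)
    · simp only [map_mul, FreeGroup.lift_apply_of]
      exact hfsq w
    · have hcomm : Commute (f a) (f b) := by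
        by_cases ha1 : a = u
        · by_cases hb1 : b = u
          · rw [ha1, hb1]
          · by_cases hb2 : b = v
            · rw [ha1, hb2] at hab
              exact absurd hab hadj
            · rw [hf1 b hb1 hb2]; exact Commute.one_right _
        · by_cases ha2 : a = v
          · by_cases hb1 : b = u
            · rw [ha2, hb1] at hab
              exact absurd hab.symm hadj
            · by_cases hb2 : b = v
              · rw [ha2, hb2]
              · rw [hf1 b hb1 hb2]; exact Commute.one_right _
          · rw [hf1 a ha1 ha2]; exact Commute.one_left _
      simp only [map_mul, map_inv, FreeGroup.lift_apply_of]
      rw [hcomm.eq]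
      group
  set φ : RACG G →* Equiv.Perm ℤ := PresentedGroup.toGroup hrels with hφ
  have hφgen : ∀ w : V, φ (racgGen G w) = f w := fun w => PresentedGroup.toGroup.of hrels
  have hstep : ∀ (w : V) (y : ℤ), |φ (racgGen G w) y| ≤ |y| + 2 := by
    intro w y
    rw [hφgen w]
    rcases hfval w with h | h | h <;> rw [h]
    · rw [negE_apply, abs_neg]; linarith
    · rw [refE_apply]
      rcases abs_cases y with ⟨hy, _⟩ | ⟨hy, _⟩ <;>
        rcases abs_cases (2 - y) with ⟨hz, _⟩ | ⟨hz, _⟩ <;> omega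
    · simp only [Equiv.Perm.coe_one, id_eq]
      linarith
  have hbound : ∀ l : List V, |φ ((l.map (racgGen G)).prod) 0| ≤ 2 * l.length := by
    intro l
    induction l with
    | nil => simp
    | cons w t ih =>
      rw [List.map_cons, List.prod_cons, map_mul, Equiv.Perm.mul_apply]
      calc |φ (racgGen G w) (φ ((t.map (racgGen G)).prod) 0)|
          ≤ |φ ((t.map (racgGen G)).prod) 0| + 2 := hstep _ _
        _ ≤ 2 * t.length + 2 := by linarith
        _ ≤ 2 * (w :: t).length := by simp [List.length_cons]; ring_nf; omega
  set n : ℕ := N + 1 with hn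
  set g : RACG G := (racgGen G u * racgGen G v) ^ n with hg
  have hmemu : racgGen G u ∈ racgGen G '' A := ⟨u, hu, rfl⟩
  have hmemv : racgGen G v ∈ racgGen G '' A := ⟨v, hv, rfl⟩
  have hgA : g ∈ Subgroup.closure (racgGen G '' A) :=
    pow_mem (mul_mem (Subgroup.subset_closure hmemu) (Subgroup.subset_closure hmemv)) n
  obtain ⟨h, hh, l, hlen, hprod⟩ := H g hgA
  -- φ h is 1 or refE
  have hφh : φ h = 1 ∨ φ h = refE := by
    have h1 : φ h ∈ Subgroup.closure (⇑φ '' (racgGen G '' B)) := by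
      rw [← MonoidHom.map_closure]
      exact Subgroup.mem_map_of_mem φ hh
    have h2 : Subgroup.closure (⇑φ '' (racgGen G '' B)) ≤ Subgroup.closure {refE} := by
      apply (Subgroup.closure_le _).mpr
      rintro x ⟨y, ⟨b, hb, rfl⟩, rfl⟩
      rw [hφgen b]
      have hbu : b ≠ u := fun e => huB (e ▸ hb)
      by_cases hbv : b = v
      · rw [hbv, hfv]
        exact Subgroup.subset_closure rfl
      · rw [hf1 b hbu hbv]
        exact one_mem _
    refine Subgroup.closure_induction ?_ ?_ ?_ ?_ (h2 h1)
    · rintro x rfl; exact Or.inr rfl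
    · exact Or.inl rfl
    · rintro x y _ _ (rfl | rfl) (rfl | rfl)
      · exact Or.inl (one_mul 1)
      · exact Or.inr (one_mul _)
      · exact Or.inr (mul_one _)
      · exact Or.inl refE_sq
    · rintro x _ (rfl | rfl)
      · exact Or.inl inv_one
      · exact Or.inr refE_inv
  have hpow : ∀ (m : ℕ) (x : ℤ), ((negE * refE) ^ m) x = x - 2 * m := by
    intro m
    induction m with
    | zero => simp
    | succ k ih =>
      intro x
      rw [pow_succ', Equiv.Perm.mul_apply, Equiv.Perm.mul_apply]
      simp only [refE_apply, negE_apply]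
      rw [ih]
      push_cast
      ring
  have hφg : φ g 0 = -(2 * n) := by
    rw [hg, map_pow, map_mul, hφgen u, hφgen v, hfu, hfv, hpow n 0]
    ring
  have hval : φ (h⁻¹ * g) 0 = -(2 * n) ∨ φ (h⁻¹ * g) 0 = 2 + 2 * n := by
    rw [map_mul, map_inv, Equiv.Perm.mul_apply]
    rcases hφh with h1 | h1
    · left; rw [h1, inv_one, hφg]; rfl
    · right; rw [h1, refE_inv, hφg, refE_apply]; ring
  have hle : |φ (h⁻¹ * g) 0| ≤ 2 * N := by
    rw [← hprod]
    calc |φ ((l.map (racgGen G)).prod) 0| ≤ 2 * l.length := hbound l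
      _ ≤ 2 * N := by omega
  rcases hval with h1 | h1 <;> rw [h1] at hle
  · rw [abs_neg, abs_of_nonneg (by positivity : (0:ℤ) ≤ 2 * (n:ℤ))] at hle
    omega
  · rw [abs_of_nonneg (by positivity : (0:ℤ) ≤ 2 + 2 * (n:ℤ))] at hle
    omega

end Aux

/-- For a RACG with `Σ_B ⊆ Σ_A` (i.e. `B ⊆ A`), the standard subcomplexes `Σ_A` and
`Σ_B` (vertex sets: the special subgroups `W_A`, `W_B`, with the word metric of `W_Γ`)
are at finite Hausdorff distance iff `A = B * C` for a clique `C` joined to `B`. -/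
theorem stmt15 {V : Type*} [Fintype V] (G : SimpleGraph V) (A B : Set V) (hBA : B ⊆ A) :
    (∃ C : ℕ,
      (∀ g ∈ Subgroup.closure (racgGen G '' A),
        ∃ h ∈ Subgroup.closure (racgGen G '' B), racgWordLenLe G C (h⁻¹ * g)) ∧
      (∀ h ∈ Subgroup.closure (racgGen G '' B),
        ∃ g ∈ Subgroup.closure (racgGen G '' A), racgWordLenLe G C (h⁻¹ * g))) ↔
    (∃ C : Set V, A = B ∪ C ∧ Disjoint B C ∧
      (∀ c ∈ C, ∀ c' ∈ C, c ≠ c' → G.Adj c c') ∧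
      (∀ c ∈ C, ∀ b ∈ B, G.Adj c b)) := by
  classical
  constructor
  · rintro ⟨N, H1, -⟩
    refine ⟨A \ B, (Set.union_diff_cancel hBA).symm, disjoint_sdiff_self_right, ?_, ?_⟩
    · rintro c ⟨hcA, hcB⟩ c' ⟨hc'A, hc'B⟩ hne
      by_contra hadj
      exact forward_aux G A B hcA hc'A hcB hne hadj N H1
    · rintro c ⟨hcA, hcB⟩ b hb
      by_contra hadj
      exact forward_aux G A B hcA (hBA hb) hcB (fun e => hcB (e ▸ hb)) hadj N H1
  · rintro ⟨C, rfl, hdisj, hclique, hjoin⟩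
    -- pairwise commuting generators in C
    have hcc : ∀ c ∈ C, ∀ c' ∈ C, Commute (racgGen G c) (racgGen G c') := by
      intro c hc c' hc'
      by_cases h : c = c'
      · rw [h]
      · exact racg_comm G (hclique c hc c' hc' h)
    -- a generator in C commutes with a C-word
    have hcprod : ∀ c ∈ C, ∀ l : List V, (∀ x ∈ l, x ∈ C) →
        Commute (racgGen G c) ((l.map (racgGen G)).prod) := by
      intro c hc l hl
      refine Commute.list_prod_right _ _ ?_
      intro x hx
      obtain ⟨w, hw, rfl⟩ := List.mem_map.mp hx
      exact hcc c hc w (hl w hw)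
    -- a C-word commutes with every element of W_B
    have hPcomm : ∀ l : List V, (∀ x ∈ l, x ∈ C) →
        ∀ z ∈ Subgroup.closure (racgGen G '' B),
          Commute ((l.map (racgGen G)).prod) z := by
      intro l hl z hz
      have hle : Subgroup.closure (racgGen G '' B) ≤
          Subgroup.centralizer {(l.map (racgGen G)).prod} := by
        apply (Subgroup.closure_le _).mpr
        rintro x ⟨b, hb, rfl⟩
        rw [SetLike.mem_coe, Subgroup.mem_centralizer_iff]
        rintro y rfl
        have hcb : Commute ((l.map (racgGen G)).prod) (racgGen G b) := by
          refine Commute.list_prod_left _ _ ?_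
          intro x hx
          obtain ⟨w, hw, rfl⟩ := List.mem_map.mp hx
          exact racg_comm G (hjoin w (hl w hw) b hb)
        exact hcb.eq
      have := hle hz
      rw [Subgroup.mem_centralizer_iff] at this
      exact (this _ rfl)
    -- pulling a letter out of a C-word
    have hpull : ∀ l : List V, (∀ x ∈ l, x ∈ C) → ∀ w ∈ l,
        (l.map (racgGen G)).prod = racgGen G w * (((l.erase w).map (racgGen G)).prod) := by
      intro l
      induction l with
      | nil => intro _ w hw; simp at hw
      | cons a t ih =>
        intro hl w hw
        by_cases haw : a = w
        · subst haw
          rw [List.erase_cons_head]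
          simp
        · have hwt : w ∈ t := by
            rcases List.mem_cons.mp hw with h | h
            · exact absurd h.symm haw
            · exact h
          rw [List.erase_cons_tail (by simpa using haw)]
          simp only [List.map_cons, List.prod_cons]
          rw [ih (fun x hx => hl x (List.mem_cons_of_mem _ hx)) w hwt]
          rw [← mul_assoc, ← mul_assoc,
            (hcc a (hl a (List.mem_cons_self)) w (hl w hw)).eq]
    -- reduction of a C-word to a duplicate-free one
    have hreduce : ∀ l : List V, (∀ x ∈ l, x ∈ C) →
        ∃ l' : List V, l'.Nodup ∧ (∀ x ∈ l', x ∈ C) ∧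
          ((l'.map (racgGen G)).prod = (l.map (racgGen G)).prod) := by
      intro l
      induction l with
      | nil => exact fun _ => ⟨[], List.nodup_nil, by simp, rfl⟩
      | cons a t ih =>
        intro hl
        obtain ⟨t', ht'nd, ht'C, ht'⟩ := ih (fun x hx => hl x (List.mem_cons_of_mem _ hx))
        have haC : a ∈ C := hl a (List.mem_cons_self)
        by_cases hat : a ∈ t'
        · refine ⟨t'.erase a, ht'nd.erase a, fun x hx => ht'C x (List.mem_of_mem_erase hx), ?_⟩
          have := hpull t' ht'C a hat
          rw [List.map_cons, List.prod_cons, ← ht', this, ← mul_assoc, racg_sq, one_mul]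
        · refine ⟨a :: t', List.nodup_cons.mpr ⟨hat, ht'nd⟩, ?_, ?_⟩
          · intro x hx
            rcases List.mem_cons.mp hx with h | h
            · exact h ▸ haC
            · exact ht'C x h
          · rw [List.map_cons, List.prod_cons, List.map_cons, List.prod_cons, ht']
    -- a C-word is an involution
    have hinvol : ∀ l : List V, (∀ x ∈ l, x ∈ C) →
        ((l.map (racgGen G)).prod) * ((l.map (racgGen G)).prod) = 1 := by
      intro l
      induction l with
      | nil => simp
      | cons a t ih =>
        intro hl
        have haC : a ∈ C := hl a (List.mem_cons_self)
        have htC : ∀ x ∈ t, x ∈ C := fun x hx => hl x (List.mem_cons_of_mem _ hx)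
        simp only [List.map_cons, List.prod_cons]
        have hco := (hcprod a haC t htC).eq
        calc racgGen G a * (t.map (racgGen G)).prod * (racgGen G a * (t.map (racgGen G)).prod)
            = racgGen G a * ((t.map (racgGen G)).prod * racgGen G a) * (t.map (racgGen G)).prod := by
              group
          _ = racgGen G a * (racgGen G a * (t.map (racgGen G)).prod) * (t.map (racgGen G)).prod := by
              rw [← hco]
          _ = (racgGen G a * racgGen G a) * ((t.map (racgGen G)).prod * (t.map (racgGen G)).prod) := by
              group
          _ = 1 := by rw [racg_sq, ih htC, one_mul]
    -- decomposition of elements of W_{B ∪ C}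
    have hdecomp : ∀ g ∈ Subgroup.closure (racgGen G '' (B ∪ C)),
        ∃ h ∈ Subgroup.closure (racgGen G '' B), ∃ l : List V,
          l.Nodup ∧ (∀ x ∈ l, x ∈ C) ∧ g = h * (l.map (racgGen G)).prod := by
      intro g hg
      refine Subgroup.closure_induction ?_ ?_ ?_ ?_ hg
      · rintro x ⟨w, hw | hw, rfl⟩
        · exact ⟨racgGen G w, Subgroup.subset_closure ⟨w, hw, rfl⟩, [], List.nodup_nil,
            by simp, by simp⟩
        · refine ⟨1, one_mem _, [w], List.nodup_singleton w, ?_, by simp⟩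
          intro x hx
          rw [List.mem_singleton.mp hx]
          exact hw
      · exact ⟨1, one_mem _, [], List.nodup_nil, by simp, by simp⟩
      · rintro x y _ _ ⟨h₁, hh₁, l₁, hl₁nd, hl₁C, rfl⟩ ⟨h₂, hh₂, l₂, hl₂nd, hl₂C, rfl⟩
        have hcomm := hPcomm l₁ hl₁C h₂ hh₂
        have happ : ∀ x ∈ l₁ ++ l₂, x ∈ C := by
          intro x hx
          rcases List.mem_append.mp hx with h | h
          · exact hl₁C x h
          · exact hl₂C x h
        obtain ⟨l₃, hl₃nd, hl₃C, hl₃⟩ := hreduce (l₁ ++ l₂) happ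
        refine ⟨h₁ * h₂, mul_mem hh₁ hh₂, l₃, hl₃nd, hl₃C, ?_⟩
        rw [hl₃, List.map_append, List.prod_append]
        calc h₁ * (l₁.map (racgGen G)).prod * (h₂ * (l₂.map (racgGen G)).prod)
            = h₁ * ((l₁.map (racgGen G)).prod * h₂) * (l₂.map (racgGen G)).prod := by group
          _ = h₁ * (h₂ * (l₁.map (racgGen G)).prod) * (l₂.map (racgGen G)).prod := by
              rw [hcomm.eq]
          _ = h₁ * h₂ * ((l₁.map (racgGen G)).prod * (l₂.map (racgGen G)).prod) := by group
      · rintro x _ ⟨h, hh, l, hlnd, hlC, rfl⟩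
        refine ⟨h⁻¹, inv_mem hh, l, hlnd, hlC, ?_⟩
        have hPinv : ((l.map (racgGen G)).prod)⁻¹ = (l.map (racgGen G)).prod :=
          inv_eq_of_mul_eq_one_right (hinvol l hlC)
        rw [mul_inv_rev, hPinv, (hPcomm l hlC h⁻¹ (inv_mem hh)).eq]
    refine ⟨Fintype.card V, ?_, ?_⟩
    · intro g hg
      obtain ⟨h, hh, l, hlnd, hlC, rfl⟩ := hdecomp g hg
      exact ⟨h, hh, l, hlnd.length_le_card, by rw [inv_mul_cancel_left]⟩
    · intro h hh
      refine ⟨h, Subgroup.closure_mono (Set.image_mono Set.subset_union_left) hh,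
        [], Nat.zero_le _, by simp⟩
end

section
/- Let Γ be an incomplete, triangle-free CFS graph and suppose C is a cut set of Γ that is either a pair of non-adjacent vertices {a,b} or a 2-path a–c–b (a, b non-adjacent with common neighbor c) such that Γ∖C is disconnected. Then every connected component of Γ∖C contains a vertex lying in lk(a) ∩ lk(b). -/
/-- Let `Γ` be an incomplete triangle-free CFS graph and let `C` be either a non-adjacent
cut pair `{a,b}` or a cut 2-path `a–c–b`, with `Γ∖C` disconnected. Then every connected
component of `Γ∖C` contains a vertex of `lk(a) ∩ lk(b)`. -/
theorem stmt18 {V : Type*} [Fintype V] (G : SimpleGraph V)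
    (hinc : ∃ v w : V, v ≠ w ∧ ¬ G.Adj v w)
    (htf : G.CliqueFree 3)
    (hcfs : CFS G)
    (a b : V) (hab : a ≠ b) (hnadj : ¬ G.Adj a b) (C : Set V)
    (hC : C = {a, b} ∨ ∃ c : V, G.Adj a c ∧ G.Adj c b ∧ C = {a, b, c})
    (hdisc : ∃ x y : V, x ∉ C ∧ y ∉ C ∧
      ¬ Relation.ReflTransGen (fun u w : V => u ∉ C ∧ w ∉ C ∧ G.Adj u w) x y) :
    ∀ x ∉ C, ∃ y : V,
      Relation.ReflTransGen (fun u w : V => u ∉ C ∧ w ∉ C ∧ G.Adj u w) x y ∧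
      G.Adj a y ∧ G.Adj b y := by
  classical
  obtain ⟨p0, ⟨q0, hpq0⟩, hsupp⟩ := hcfs
  set R : V → V → Prop := fun u w => u ∉ C ∧ w ∉ C ∧ G.Adj u w with hRdef
  have hRsymm : Symmetric R := fun u w h => ⟨h.2.1, h.1, h.2.2.symm⟩
  have hConnSymm : ∀ {u w : V}, Relation.ReflTransGen R u w → Relation.ReflTransGen R w u :=
    fun h => by haveI : Std.Symm R := ⟨hRsymm⟩; exact Std.Symm.symm _ _ h
  have hDsymm : ∀ {q r : V × V}, DiagAdj G q r → DiagAdj G r q := by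
    rintro q r ⟨h1, h2, h3, h4, h5, h6, h7, h8⟩
    exact ⟨h2, h1, h3.symm, h6.symm, h5.symm, h4.symm, h8, h7⟩
  -- no cone vertices
  have hnocone : ∀ v : V, ¬ IsCone G v := by
    intro v hv
    obtain ⟨h1, h2, h3, h4, h5, h6, h7, h8⟩ := hpq0
    by_cases e1 : v = p0.1
    · subst e1; exact h7 (hv p0.2 (fun h => h1 h.symm))
    by_cases e2 : v = p0.2
    · subst e2; exact h7 (hv p0.1 (fun h => h1 h)).symm
    by_cases e3 : v = q0.1
    · subst e3; exact h8 (hv q0.2 (fun h => h2 h.symm))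
    by_cases e4 : v = q0.2
    · subst e4; exact h8 (hv q0.1 (fun h => h2 h)).symm
    exact htf {v, p0.1, q0.1}
      (SimpleGraph.is3Clique_triple_iff.mpr
        ⟨hv p0.1 (fun h => e1 h.symm), hv q0.1 (fun h => e3 h.symm), h3⟩)
  -- nonadjacent pairs in C are {a,b}
  have hCpair : ∀ s t : V, s ∈ C → t ∈ C → ¬ G.Adj s t → s ≠ t →
      (s = a ∧ t = b) ∨ (s = b ∧ t = a) := by
    intro s t hs ht hnadj' hne
    rcases hC with h | ⟨c, hac, hcb, h⟩
    · subst h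
      simp only [Set.mem_insert_iff, Set.mem_singleton_iff] at hs ht
      rcases hs with hs | hs <;> rcases ht with ht | ht <;> subst hs <;> subst ht <;> tauto
    · subst h
      simp only [Set.mem_insert_iff, Set.mem_singleton_iff] at hs ht
      rcases hs with hs | hs | hs <;> rcases ht with ht | ht | ht <;> subst hs <;> subst ht <;>
        tauto
  -- cross adjacency in a square
  have hcross : ∀ q r : V × V, DiagAdj G q r → ∀ z z' : V,
      (z = q.1 ∨ z = q.2) → (z' = r.1 ∨ z' = r.2) → G.Adj z z' := by
    rintro q r ⟨h1, h2, h3, h4, h5, h6, h7, h8⟩ z z' hz hz'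
    rcases hz with hz | hz <;> rcases hz' with hz' | hz' <;> subst hz <;> subst hz'
    · exact h3
    · exact h6.symm
    · exact h4.symm
    · exact h5
  set Good : V → Prop :=
    fun u => ∃ y, Relation.ReflTransGen R u y ∧ G.Adj a y ∧ G.Adj b y with hGdef
  -- transfer across a square
  have htransfer : ∀ (u : V) (q r : V × V), DiagAdj G q r → ∀ z : V,
      (z = q.1 ∨ z = q.2) → z ∉ C → Relation.ReflTransGen R z u →
      Good u ∨ ((r.1 ∉ C ∨ r.2 ∉ C) ∧ ∀ z' : V, (z' = r.1 ∨ z' = r.2) → z' ∉ C →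
        Relation.ReflTransGen R z' u) := by
    intro u q r hd z hz hzC hzu
    by_cases hrC : r.1 ∈ C ∧ r.2 ∈ C
    · left
      have hr12 : ¬ G.Adj r.1 r.2 := hd.2.2.2.2.2.2.2
      have hrne : r.1 ≠ r.2 := hd.2.1
      rcases hCpair r.1 r.2 hrC.1 hrC.2 hr12 hrne with ⟨ha', hb'⟩ | ⟨ha', hb'⟩
      · exact ⟨z, hConnSymm hzu, ha' ▸ (hcross q r hd z r.1 hz (Or.inl rfl)).symm,
          hb' ▸ (hcross q r hd z r.2 hz (Or.inr rfl)).symm⟩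
      · exact ⟨z, hConnSymm hzu, hb' ▸ (hcross q r hd z r.2 hz (Or.inr rfl)).symm,
          ha' ▸ (hcross q r hd z r.1 hz (Or.inl rfl)).symm⟩
    · right
      refine ⟨by tauto, ?_⟩
      intro z' hz' hz'C
      exact Relation.ReflTransGen.head ⟨hz'C, hzC, (hcross q r hd z z' hz hz').symm⟩ hzu
  -- invariant along a chain of diagonals
  have hchain : ∀ (u : V) (qu : V × V), u ∉ C → (u = qu.1 ∨ u = qu.2) →
      ∀ q : V × V, Relation.ReflTransGen (DiagAdj G) qu q →
      Good u ∨ q = qu ∨ ((q.1 ∉ C ∨ q.2 ∉ C) ∧ ∀ z : V, (z = q.1 ∨ z = q.2) → z ∉ C →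
        Relation.ReflTransGen R z u) := by
    intro u qu huC hu q hq
    induction hq with
    | refl => exact Or.inr (Or.inl rfl)
    | @tail m q' hrest hstep ih =>
      rcases ih with hgood | heq | ⟨hex, hall⟩
      · exact Or.inl hgood
      · subst heq
        have hu' : u = m.1 ∨ u = m.2 := hu
        rcases htransfer u m q' hstep u hu' huC Relation.ReflTransGen.refl with h | h
        · exact Or.inl h
        · exact Or.inr (Or.inr h)
      · rcases hex with h | h
        · rcases htransfer u m q' hstep m.1 (Or.inl rfl) h (hall m.1 (Or.inl rfl) h) with
            h' | h'
          · exact Or.inl h'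
          · exact Or.inr (Or.inr h')
        · rcases htransfer u m q' hstep m.2 (Or.inr rfl) h (hall m.2 (Or.inr rfl) h) with
            h' | h'
          · exact Or.inl h'
          · exact Or.inr (Or.inr h')
  -- every diagonal in the component has a neighbor
  have hnbr : ∀ q : V × V, Relation.ReflTransGen (DiagAdj G) p0 q → ∃ r, DiagAdj G q r := by
    intro q hq
    induction hq with
    | refl => exact ⟨q0, hpq0⟩
    | @tail m q' hrest hstep ih => exact ⟨m, hDsymm hstep⟩
  have hDsymm' : Symmetric (DiagAdj G) := fun _ _ h => hDsymm h
  -- main lemma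
  have hmain : ∀ u w : V, u ∉ C → w ∉ C → Good u ∨ Relation.ReflTransGen R u w := by
    intro u w huC hwC
    obtain ⟨qu, hqu, hu⟩ := hsupp u (hnocone u)
    obtain ⟨qw, hqw, hw⟩ := hsupp w (hnocone w)
    obtain ⟨r, hr⟩ := hnbr qw hqw
    have hchain_uw : Relation.ReflTransGen (DiagAdj G) qu qw :=
      (by haveI : Std.Symm (DiagAdj G) := ⟨hDsymm'⟩; exact Std.Symm.symm _ _ hqu : Relation.ReflTransGen (DiagAdj G) qu p0).trans hqw
    have hext : Relation.ReflTransGen (DiagAdj G) qu r := hchain_uw.tail hr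
    rcases hchain u qu huC hu r hext with hgood | heq | ⟨hex, hall⟩
    · exact Or.inl hgood
    · subst heq
      exact Or.inr (Relation.ReflTransGen.single
        ⟨huC, hwC, (hcross qw r hr w u hw hu).symm⟩)
    · rcases hex with h | h
      · refine Or.inr (hConnSymm ?_)
        exact Relation.ReflTransGen.head
          ⟨hwC, h, hcross qw r hr w r.1 hw (Or.inl rfl)⟩ (hall r.1 (Or.inl rfl) h)
      · refine Or.inr (hConnSymm ?_)
        exact Relation.ReflTransGen.head
          ⟨hwC, h, hcross qw r hr w r.2 hw (Or.inr rfl)⟩ (hall r.2 (Or.inr rfl) h)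
  intro x hxC
  obtain ⟨x0, y0, hx0, hy0, hsep⟩ := hdisc
  have hx : Good x := by
    by_cases hxx0 : Relation.ReflTransGen R x x0
    · rcases hmain x y0 hxC hy0 with h | h
      · exact h
      · exact absurd ((hConnSymm hxx0).trans h) hsep
    · rcases hmain x x0 hxC hx0 with h | h
      · exact h
      · exact absurd h hxx0
  obtain ⟨y, h1, h2, h3⟩ := hx
  exact ⟨y, h1, h2, h3⟩
end
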